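/- arXiv:1902.06152 — 12 statements merged into one kernel-verified Lean document; each statement's English description precedes it below -/
import Mathlib

section
/- If a and b are distinct points of a compact Hausdorff space X that are pin equivalent, then there exists a symmetric closed binary relation R on X with domain X such that for all x ∈ X: a R x ↔ x = b, and b R x ↔ x = a. (Representation theorem for pin equivalence.) -/
universe u

/-- Points `a`, `b` of a compact Hausdorff space `X` are pin equivalent if there exist a
compact Hausdorff space `Y`, a continuous surjection `f : Y → X`, and a homeomorphism
`g : Y → Y` with `g (f ⁻¹' {a}) = f ⁻¹' {b}`. -/
def PinEquiv {X : Type u} [TopologicalSpace X] (a b : X) : Prop :=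
  ∃ (Y : Type u) (_ : TopologicalSpace Y) (_ : CompactSpace Y) (_ : T2Space Y)
    (f : Y → X) (g : Y ≃ₜ Y),
    Continuous f ∧ Function.Surjective f ∧ (g : Y → Y) '' (f ⁻¹' {a}) = f ⁻¹' {b}

/-- Representation theorem: if distinct points `a ≠ b` of a compact Hausdorff space are
pin equivalent, then there is a symmetric closed relation `R` on `X` with full domain
such that `a R x ↔ x = b` and `b R x ↔ x = a`. -/
theorem pinEquiv_represent {X : Type u} [TopologicalSpace X] [CompactSpace X] [T2Space X]
    {a b : X} (hab : a ≠ b) (h : PinEquiv a b) :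
    ∃ R : Set (X × X), IsClosed R ∧ (∀ p ∈ R, Prod.swap p ∈ R) ∧
      (∀ x : X, ∃ y : X, (x, y) ∈ R) ∧
      (∀ x : X, (a, x) ∈ R ↔ x = b) ∧ (∀ x : X, (b, x) ∈ R ↔ x = a) := by
  obtain ⟨Y, _, _, _, f, g, hf, hfs, hg⟩ := h
  set A : Set Y := f ⁻¹' {a} with hA
  set B : Set Y := f ⁻¹' {b} with hB
  -- key equivalence
  have key : ∀ y : Y, f (g y) = b ↔ f y = a := by
    intro y
    constructor
    · intro hy
      have : g y ∈ B := hy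
      rw [← hg] at this
      obtain ⟨z, hz, hz'⟩ := this
      have : z = y := g.injective hz'
      subst this; exact hz
    · intro hy
      have : g y ∈ (g : Y → Y) '' A := ⟨y, hy, rfl⟩
      rw [hg] at this
      exact this
  have hAclosed : IsClosed A := (isClosed_singleton).preimage hf
  have hBclosed : IsClosed B := (isClosed_singleton).preimage hf
  have hgAclosed : IsClosed ((g : Y → Y) ⁻¹' A) := hAclosed.preimage g.continuous
  -- disjointness
  have hdisj : Disjoint A (B ∪ (g : Y → Y) ⁻¹' A) := by
    rw [Set.disjoint_union_right]
    constructor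
    · rw [Set.disjoint_left]
      intro y hyA hyB
      exact hab (hyA.symm.trans hyB)
    · rw [Set.disjoint_left]
      intro y hyA hyG
      have h1 : f (g y) = b := (key y).mpr hyA
      have h2 : f (g y) = a := hyG
      exact hab (h2.symm.trans h1)
  obtain ⟨U, V, hUo, hVo, hAU, hKV, hUV⟩ :=
    NormalSpace.normal A (B ∪ (g : Y → Y) ⁻¹' A) hAclosed (hBclosed.union hgAclosed) hdisj
  set C : Set Y := closure U with hC
  have hCV : Disjoint C V := by
    rw [Set.disjoint_left]
    intro y hyC hyV
    have : y ∈ closure U := hyC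
    rcases mem_closure_iff.mp this V hVo hyV with ⟨z, hzV, hzU⟩
    exact Set.disjoint_left.mp hUV hzU hzV
  have hCB : ∀ y ∈ C, f y ≠ b := by
    intro y hy hyb
    exact Set.disjoint_left.mp hCV hy (hKV (Or.inl hyb))
  have hCgA : ∀ y ∈ C, f (g y) ≠ a := by
    intro y hy hya
    exact Set.disjoint_left.mp hCV hy (hKV (Or.inr hya))
  set E : Set Y := (U ∪ (g : Y → Y) '' U)ᶜ with hE
  have hEclosed : IsClosed E := by
    apply IsOpen.isClosed_compl
    exact hUo.union (g.isOpenMap U hUo)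
  have hEA : ∀ y ∈ E, f y ≠ a := by
    intro y hy hya
    exact hy (Or.inl (hAU hya))
  have hEB : ∀ y ∈ E, f y ≠ b := by
    intro y hy hyb
    have : y ∈ B := hyb
    rw [← hg] at this
    obtain ⟨z, hz, hz'⟩ := this
    exact hy (Or.inr ⟨z, hAU hz, hz'⟩)
  have hCcomp : IsCompact C := isClosed_closure.isCompact
  have hEcomp : IsCompact E := hEclosed.isCompact
  -- the relation
  refine ⟨(fun y => (f y, f (g y))) '' C ∪ (fun y => (f (g y), f y)) '' C ∪
    (fun y => (f y, f y)) '' E, ?_, ?_, ?_, ?_, ?_⟩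
  · have c1 : Continuous fun y : Y => (f y, f (g y)) :=
      (hf.prodMk (hf.comp g.continuous))
    have c2 : Continuous fun y : Y => (f (g y), f y) :=
      ((hf.comp g.continuous).prodMk hf)
    have c3 : Continuous fun y : Y => (f y, f y) := hf.prodMk hf
    exact (((hCcomp.image c1).isClosed.union (hCcomp.image c2).isClosed).union
      (hEcomp.image c3).isClosed)
  · intro p hp
    simp only [Set.mem_union, Set.mem_image] at hp ⊢
    rcases hp with ((⟨y, hy, rfl⟩ | ⟨y, hy, rfl⟩) | ⟨y, hy, rfl⟩)
    · exact Or.inl (Or.inr ⟨y, hy, rfl⟩)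
    · exact Or.inl (Or.inl ⟨y, hy, rfl⟩)
    · exact Or.inr ⟨y, hy, rfl⟩
  · intro x
    obtain ⟨y, rfl⟩ := hfs x
    by_cases hyU : y ∈ U
    · exact ⟨f (g y), Or.inl (Or.inl ⟨y, subset_closure hyU, rfl⟩)⟩
    by_cases hygU : y ∈ (g : Y → Y) '' U
    · obtain ⟨z, hz, rfl⟩ := hygU
      exact ⟨f z, Or.inl (Or.inr ⟨z, subset_closure hz, rfl⟩)⟩
    · exact ⟨f y, Or.inr ⟨y, fun hc => hc.elim hyU hygU, rfl⟩⟩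
  · intro x
    constructor
    · intro hp
      simp only [Set.mem_union, Set.mem_image] at hp
      rcases hp with ((⟨y, hy, heq⟩ | ⟨y, hy, heq⟩) | ⟨y, hy, heq⟩)
      · have h1 : f y = a := (congrArg Prod.fst heq)
        have h2 : f (g y) = x := (congrArg Prod.snd heq)
        rw [← h2]; exact (key y).mpr h1
      · exact absurd (congrArg Prod.fst heq) (hCgA y hy)
      · exact absurd (congrArg Prod.fst heq) (hEA y hy)
    · intro hx
      obtain ⟨y, hy⟩ := hfs a
      have hyA : y ∈ A := hy
      have hb : f (g y) = b := (key y).mpr hy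
      exact Or.inl (Or.inl ⟨y, subset_closure (hAU hyA), by simp only [hy, hb, hx]⟩)
  · intro x
    constructor
    · intro hp
      simp only [Set.mem_union, Set.mem_image] at hp
      rcases hp with ((⟨y, hy, heq⟩ | ⟨y, hy, heq⟩) | ⟨y, hy, heq⟩)
      · exact absurd (congrArg Prod.fst heq) (hCB y hy)
      · have h1 : f (g y) = b := (congrArg Prod.fst heq)
        have h2 : f y = x := (congrArg Prod.snd heq)
        rw [← h2]; exact (key y).mp h1
      · exact absurd (congrArg Prod.fst heq) (hEB y hy)
    · intro hx
      obtain ⟨y, hy⟩ := hfs a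
      have hyA : y ∈ A := hy
      have hb : f (g y) = b := (key y).mpr hy
      exact Or.inl (Or.inr ⟨y, subset_closure (hAU hyA), by simp only [hy, hb, hx]⟩)
end

section
/- Suppose R is a closed relation on a compact Hausdorff space X such that a R x ↔ x = b for all x. If V is a neighborhood of b, then a has a neighborhood U such that R(U) ⊆ V, where R(U) = {y : ∃ x ∈ U, x R y}. -/
/-- If `R` is a closed relation on a compact Hausdorff space with `a R x ↔ x = b`, and `V`
is a neighborhood of `b`, then `a` has a neighborhood `U` with `R(U) ⊆ V`. -/
theorem relation_image_small {X : Type*} [TopologicalSpace X] [CompactSpace X] [T2Space X]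
    {a b : X} {R : Set (X × X)} (hclosed : IsClosed R)
    (ha : ∀ x : X, (a, x) ∈ R ↔ x = b)
    {V : Set X} (hV : b ∈ interior V) :
    ∃ U : Set X, a ∈ interior U ∧ {y : X | ∃ x ∈ U, (x, y) ∈ R} ⊆ V := by
  set C : Set (X × X) := R ∩ {p | p.2 ∉ interior V} with hC
  have hCclosed : IsClosed C :=
    hclosed.inter (isOpen_interior.preimage continuous_snd).isClosed_compl
  have hCcompact : IsCompact C := hCclosed.isCompact
  have hKcompact : IsCompact (Prod.fst '' C) := hCcompact.image continuous_fst
  have hKclosed : IsClosed (Prod.fst '' C) := hKcompact.isClosed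
  refine ⟨(Prod.fst '' C)ᶜ, ?_, ?_⟩
  · rw [hKclosed.isOpen_compl.interior_eq]
    rintro ⟨⟨x, y⟩, ⟨hR, hy⟩, rfl⟩
    exact hy (((ha y).mp hR) ▸ hV)
  · rintro y ⟨x, hx, hxy⟩
    by_contra hyV
    exact hx ⟨(x, y), ⟨hxy, fun h => hyV (interior_subset h)⟩, rfl⟩
end

section
/- Suppose R is a closed relation on a compact Hausdorff space X with (a R x ↔ x = b) for all x, and (x_i) is a net converging to a with x_i R y_i for all i. Then the net (y_i) converges to b. -/
/-- If `R` is a closed relation on a compact Hausdorff space with `a R x ↔ x = b`, and a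
net `(x_i)` converges to `a` with `x_i R y_i` for all `i`, then `(y_i)` converges to `b`. -/
theorem relation_net_tendsto {X : Type*} [TopologicalSpace X] [CompactSpace X] [T2Space X]
    {a b : X} {R : Set (X × X)} (hclosed : IsClosed R)
    (ha : ∀ x : X, (a, x) ∈ R ↔ x = b)
    {I : Type*} [Preorder I] [Nonempty I] (hdir : IsDirected I (· ≤ ·))
    {x y : I → X} (hR : ∀ i, (x i, y i) ∈ R)
    (hx : Filter.Tendsto x Filter.atTop (nhds a)) :
    Filter.Tendsto y Filter.atTop (nhds b) := by
  apply tendsto_nhds_of_unique_mapClusterPt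
  intro c hc
  rw [← ha c]
  set G := Filter.atTop ⊓ Filter.comap y (nhds c) with hG
  have hmap : Filter.map y G = Filter.map y Filter.atTop ⊓ nhds c := Filter.push_pull y _ _
  have hne : G.NeBot := by
    rw [← Filter.map_neBot_iff y, hmap, inf_comm]
    exact hc
  have hxG : Filter.Tendsto x G (nhds a) := hx.mono_left inf_le_left
  have hyG : Filter.Tendsto y G (nhds c) := by
    rw [Filter.Tendsto, hmap]; exact inf_le_right
  have hpair : Filter.Tendsto (fun i => (x i, y i)) G (nhds (a, c)) := by
    rw [nhds_prod_eq]; exact hxG.prodMk hyG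
  exact hclosed.mem_of_tendsto hpair (Filter.Eventually.of_forall hR)
end

section
/- Pin equivalence of points in a compact Hausdorff space is transitive: if a ≡ₚ b and b ≡ₚ c then a ≡ₚ c. -/
universe u

/-- Auxiliary: a closed relation with full domain and range that pins `a` to `c`
(in the directed sense) yields pin equivalence, via the space of bi-infinite
`T`-chains with the shift homeomorphism. -/
theorem pinEquiv_of_rel {X : Type u} [TopologicalSpace X] [CompactSpace X] [T2Space X]
    {a c : X} (T : X → X → Prop) (hcl : IsClosed {z : X × X | T z.1 z.2})
    (hdom : ∀ x, ∃ y, T x y) (hrng : ∀ y, ∃ x, T x y)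
    (haT : ∀ y, T a y ↔ y = c) (hTc : ∀ x, T x c ↔ x = a) : PinEquiv a c := by
  classical
  -- the chain space
  have hYclosed : IsClosed {u : ℤ → X | ∀ n : ℤ, T (u n) (u (n + 1))} := by
    have he : {u : ℤ → X | ∀ n : ℤ, T (u n) (u (n + 1))} =
        ⋂ n : ℤ, (fun u : ℤ → X => (u n, u (n + 1))) ⁻¹' {z : X × X | T z.1 z.2} := by
      ext u; simp [Set.mem_iInter]
    rw [he]
    exact isClosed_iInter fun n =>
      hcl.preimage ((continuous_apply n).prodMk (continuous_apply (n + 1)))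
  have hvc : Continuous (fun u : {u : ℤ → X // ∀ n : ℤ, T (u n) (u (n + 1))} => u.1) :=
    continuous_subtype_val
  let G : {u : ℤ → X // ∀ n : ℤ, T (u n) (u (n + 1))} ≃ₜ
      {u : ℤ → X // ∀ n : ℤ, T (u n) (u (n + 1))} :=
    { toFun := fun u => ⟨fun n => u.1 (n + 1), fun n => u.2 (n + 1)⟩
      invFun := fun u => ⟨fun n => u.1 (n - 1), fun n => by
        have h := u.2 (n - 1)
        have he : n - 1 + 1 = n + 1 - 1 := by ring
        rwa [he] at h⟩
      left_inv := fun u => Subtype.ext (funext fun n => by simp)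
      right_inv := fun u => Subtype.ext (funext fun n => by simp)
      continuous_toFun := Continuous.subtype_mk
        (continuous_pi fun n => (continuous_apply (n + 1)).comp hvc) _
      continuous_invFun := Continuous.subtype_mk
        (continuous_pi fun n => (continuous_apply (n - 1)).comp hvc) _ }
  refine ⟨{u : ℤ → X // ∀ n : ℤ, T (u n) (u (n + 1))}, inferInstance,
    isCompact_iff_compactSpace.mp hYclosed.isCompact, inferInstance,
    fun u => u.1 0, G,
    (continuous_apply (0 : ℤ)).comp hvc, ?_, ?_⟩
  · -- surjectivity of evaluation at 0
    choose nxt hnxt using hdom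
    choose prv hprv using hrng
    intro x
    refine ⟨⟨fun n : ℤ => if 0 ≤ n then nxt^[n.toNat] x else prv^[(-n).toNat] x, ?_⟩, by simp⟩
    intro n
    rcases lt_trichotomy n (-1) with h | h | h
    · have h1 : ¬ (0 : ℤ) ≤ n := by omega
      have h2 : ¬ (0 : ℤ) ≤ n + 1 := by omega
      have h3 : (-n).toNat = (-(n + 1)).toNat + 1 := by omega
      simp only [if_neg h1, if_neg h2, h3, Function.iterate_succ_apply']
      exact hprv _
    · subst h
      have h1 : ¬ (0 : ℤ) ≤ (-1 : ℤ) := by norm_num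
      have h2 : (-1 : ℤ) + 1 = 0 := by ring
      simp only [h2, if_neg h1, le_refl, if_pos]
      simpa using hprv x
    · have h1 : (0 : ℤ) ≤ n := by omega
      have h2 : (0 : ℤ) ≤ n + 1 := by omega
      have h3 : (n + 1).toNat = n.toNat + 1 := by omega
      simp only [if_pos h1, if_pos h2, h3, Function.iterate_succ_apply']
      exact hnxt _
  · -- the shift maps the fiber over `a` onto the fiber over `c`
    ext v
    simp only [Set.mem_image, Set.mem_preimage, Set.mem_singleton_iff]
    constructor
    · rintro ⟨u, hu0, rfl⟩
      have h := u.2 0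
      rw [hu0] at h
      exact (haT _).mp h
    · intro hv0
      refine ⟨⟨fun n => v.1 (n - 1), fun n => by
          have h := v.2 (n - 1)
          have he : n - 1 + 1 = n + 1 - 1 := by ring
          rwa [he] at h⟩, ?_, ?_⟩
      · have h := v.2 (0 - 1)
        have he : (0 : ℤ) - 1 + 1 = 0 := by ring
        rw [he, hv0] at h
        exact (hTc _).mp h
      · refine Subtype.ext (funext fun n => ?_)
        show v.1 (n + 1 - 1) = v.1 n
        rw [add_sub_cancel_right]

/-- Pin equivalence is transitive. -/
theorem pinEquiv_trans {X : Type u} [TopologicalSpace X] [CompactSpace X] [T2Space X]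
    {a b c : X} (hab : PinEquiv a b) (hbc : PinEquiv b c) : PinEquiv a c := by
  obtain ⟨Y₁, _, _, _, f₁, g₁, hf₁c, hf₁s, hg₁⟩ := hab
  obtain ⟨Y₂, _, _, _, f₂, g₂, hf₂c, hf₂s, hg₂⟩ := hbc
  have h₁fwd : ∀ p, f₁ p = a → f₁ (g₁ p) = b := by
    intro p hp
    have hm : g₁ p ∈ f₁ ⁻¹' {b} := by
      rw [← hg₁]; exact ⟨p, by simp [hp], rfl⟩
    simpa using hm
  have h₁bwd : ∀ p, f₁ (g₁ p) = b → f₁ p = a := by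
    intro p hp
    have hm : g₁ p ∈ (g₁ : Y₁ → Y₁) '' (f₁ ⁻¹' {a}) := by
      rw [hg₁]; simpa using hp
    obtain ⟨p', hp', he⟩ := hm
    have hpp : p' = p := g₁.injective he
    subst hpp; simpa using hp'
  have h₂fwd : ∀ q, f₂ q = b → f₂ (g₂ q) = c := by
    intro q hq
    have hm : g₂ q ∈ f₂ ⁻¹' {c} := by
      rw [← hg₂]; exact ⟨q, by simp [hq], rfl⟩
    simpa using hm
  have h₂bwd : ∀ q, f₂ (g₂ q) = c → f₂ q = b := by
    intro q hq
    have hm : g₂ q ∈ (g₂ : Y₂ → Y₂) '' (f₂ ⁻¹' {b}) := by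
      rw [hg₂]; simpa using hq
    obtain ⟨q', hq', he⟩ := hm
    have hqq : q' = q := g₂.injective he
    subst hqq; simpa using hq'
  have hac : ∃ p q, f₁ p = a ∧ f₁ (g₁ p) = f₂ q ∧ f₂ (g₂ q) = c := by
    obtain ⟨p, hp⟩ := hf₁s a
    have hb := h₁fwd p hp
    obtain ⟨q, hq⟩ := hf₂s b
    exact ⟨p, q, hp, by rw [hb, hq], h₂fwd q hq⟩
  refine pinEquiv_of_rel
    (fun x y => ∃ p q, f₁ p = x ∧ f₁ (g₁ p) = f₂ q ∧ f₂ (g₂ q) = y) ?_ ?_ ?_ ?_ ?_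
  · -- closedness: continuous image of a compact set
    have himg : {z : X × X | ∃ p q, f₁ p = z.1 ∧ f₁ (g₁ p) = f₂ q ∧ f₂ (g₂ q) = z.2} =
        (fun pq : Y₁ × Y₂ => (f₁ pq.1, f₂ (g₂ pq.2))) ''
          {pq : Y₁ × Y₂ | f₁ (g₁ pq.1) = f₂ pq.2} := by
      ext ⟨x, y⟩
      constructor
      · rintro ⟨p, q, h1, h2, h3⟩
        exact ⟨(p, q), h2, by simp [h1, h3]⟩
      · rintro ⟨⟨p, q⟩, hpq, heq⟩
        obtain ⟨h1, h2⟩ := Prod.mk.injEq .. ▸ heq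
        exact ⟨p, q, h1, hpq, h2⟩
    rw [show {z : X × X | (fun x y => ∃ p q, f₁ p = x ∧ f₁ (g₁ p) = f₂ q ∧ f₂ (g₂ q) = y) z.1 z.2}
        = {z : X × X | ∃ p q, f₁ p = z.1 ∧ f₁ (g₁ p) = f₂ q ∧ f₂ (g₂ q) = z.2} from rfl, himg]
    have hcls : IsClosed {pq : Y₁ × Y₂ | f₁ (g₁ pq.1) = f₂ pq.2} :=
      isClosed_eq (hf₁c.comp (g₁.continuous.comp continuous_fst)) (hf₂c.comp continuous_snd)
    exact (hcls.isCompact.image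
      ((hf₁c.comp continuous_fst).prodMk
        (hf₂c.comp (g₂.continuous.comp continuous_snd)))).isClosed
  · -- full domain
    intro x
    obtain ⟨p, hp⟩ := hf₁s x
    obtain ⟨q, hq⟩ := hf₂s (f₁ (g₁ p))
    exact ⟨f₂ (g₂ q), p, q, hp, hq.symm, rfl⟩
  · -- full range
    intro y
    obtain ⟨r, hr⟩ := hf₂s y
    obtain ⟨p', hp'⟩ := hf₁s (f₂ (g₂.symm r))
    refine ⟨f₁ (g₁.symm p'), g₁.symm p', g₂.symm r, rfl, ?_, ?_⟩
    · rw [g₁.apply_symm_apply]; exact hp'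
    · rw [g₂.apply_symm_apply]; exact hr
  · -- row of a
    intro y
    constructor
    · rintro ⟨p, q, h1, h2, h3⟩
      have hb := h₁fwd p h1
      have hqb : f₂ q = b := by rw [← h2, hb]
      rw [← h3, h₂fwd q hqb]
    · rintro rfl
      exact hac
  · -- column of c
    intro x
    constructor
    · rintro ⟨p, q, h1, h2, h3⟩
      have hqb : f₂ q = b := h₂bwd q h3
      have hpb : f₁ (g₁ p) = b := by rw [h2, hqb]
      rw [← h1, h₁bwd p hpb]
    · rintro rfl
      exact hac
end

section
/- Let a ≠ b in a compact Hausdorff space X. There exists a symmetric closed relation R on X with domain X satisfying (a R x ↔ x = b) and (b R x ↔ x = a) if and only if there exists a closed relation S ⊆ X × X such that dom(S) is a neighborhood of a, ran(S) is a neighborhood of b disjoint from dom(S), (x S b ↔ x = a) for all x, and (a S y ↔ y = b) for all y. -/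
open Set


/-- For distinct `a, b` in a compact Hausdorff space `X`, there is a symmetric closed
relation `R` on `X` with full domain satisfying `a R x ↔ x = b` and `b R x ↔ x = a`
iff there is a closed relation `S` whose domain is a neighborhood of `a`, whose range
is a neighborhood of `b` disjoint from the domain, with `x S b ↔ x = a` and
`a S y ↔ y = b`. -/
theorem represent_iff_local {X : Type*} [TopologicalSpace X] [CompactSpace X] [T2Space X]
    {a b : X} (hab : a ≠ b) :
    (∃ R : Set (X × X), IsClosed R ∧ (∀ p ∈ R, Prod.swap p ∈ R) ∧
        (∀ x : X, ∃ y : X, (x, y) ∈ R) ∧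
        (∀ x : X, (a, x) ∈ R ↔ x = b) ∧ (∀ x : X, (b, x) ∈ R ↔ x = a)) ↔
    (∃ S : Set (X × X), IsClosed S ∧
        a ∈ interior {x : X | ∃ y : X, (x, y) ∈ S} ∧
        b ∈ interior {y : X | ∃ x : X, (x, y) ∈ S} ∧
        Disjoint {x : X | ∃ y : X, (x, y) ∈ S} {y : X | ∃ x : X, (x, y) ∈ S} ∧
        (∀ x : X, (x, b) ∈ S ↔ x = a) ∧ (∀ y : X, (a, y) ∈ S ↔ y = b)) := by
  constructor
  · rintro ⟨R, hRc, hRs, hRdom, hRa, hRb⟩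
    obtain ⟨U, V, hU, hV, haU, hbV, hUV⟩ := t2_separation hab
    obtain ⟨U', hU'n, hU'c, hU'sub⟩ := exists_mem_nhds_isClosed_subset (hU.mem_nhds haU)
    obtain ⟨V', hV'n, hV'c, hV'sub⟩ := exists_mem_nhds_isClosed_subset (hV.mem_nhds hbV)
    have haU' : a ∈ interior U' := mem_interior_iff_mem_nhds.2 hU'n
    have hbV' : b ∈ interior V' := mem_interior_iff_mem_nhds.2 hV'n
    refine ⟨R ∩ (U' ×ˢ V'), hRc.inter ((hU'c.prod hV'c)), ?_, ?_, ?_, ?_, ?_⟩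
    · -- a in interior of domain
      set A := Prod.fst '' (R ∩ (univ ×ˢ (interior V')ᶜ)) with hA
      have hAc : IsClosed A := isClosedMap_fst_of_compactSpace _
        (hRc.inter (isClosed_univ.prod isOpen_interior.isClosed_compl))
      have haA : a ∉ A := by
        rintro ⟨⟨x, y⟩, ⟨hR, -, hy⟩, rfl⟩
        exact hy (by rwa [(hRa y).1 hR])
      have hopen : IsOpen (interior U' ∩ Aᶜ) := isOpen_interior.inter hAc.isOpen_compl
      refine mem_interior.2 ⟨interior U' ∩ Aᶜ, ?_, hopen, haU', haA⟩
      rintro x ⟨hxU, hxA⟩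
      obtain ⟨y, hy⟩ := hRdom x
      have hyV : y ∈ interior V' := by
        by_contra hyv
        exact hxA ⟨(x, y), ⟨hy, trivial, hyv⟩, rfl⟩
      exact ⟨y, hy, interior_subset hxU, interior_subset hyV⟩
    · -- b in interior of range
      set B := Prod.snd '' (R ∩ ((interior U')ᶜ ×ˢ univ)) with hB
      have hBc : IsClosed B := isClosedMap_snd_of_compactSpace _
        (hRc.inter (isOpen_interior.isClosed_compl.prod isClosed_univ))
      have hbB : b ∉ B := by
        rintro ⟨⟨x, y⟩, ⟨hR, hx, -⟩, rfl⟩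
        have : (y, x) ∈ R := hRs _ hR
        exact hx (by rwa [(hRb x).1 this])
      have hopen : IsOpen (interior V' ∩ Bᶜ) := isOpen_interior.inter hBc.isOpen_compl
      refine mem_interior.2 ⟨interior V' ∩ Bᶜ, ?_, hopen, hbV', hbB⟩
      rintro y ⟨hyV, hyB⟩
      obtain ⟨x, hx⟩ := hRdom y
      have hxy : (x, y) ∈ R := hRs _ hx
      have hxU : x ∈ interior U' := by
        by_contra hxu
        exact hyB ⟨(x, y), ⟨hxy, hxu, trivial⟩, rfl⟩
      exact ⟨x, hxy, interior_subset hxU, interior_subset hyV⟩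
    · -- disjoint
      refine Set.disjoint_left.2 ?_
      rintro x ⟨y, -, hxU, -⟩ ⟨z, -, -, hxV⟩
      exact absurd (hUV.ne_of_mem (hU'sub hxU) (hV'sub hxV) rfl) (fun q => q)
    · intro x
      constructor
      · rintro ⟨hR, hx, -⟩
        exact (hRb x).1 (hRs _ hR)
      · rintro rfl
        exact ⟨(hRa _).2 rfl, mem_of_mem_nhds hU'n, mem_of_mem_nhds hV'n⟩
    · intro y
      constructor
      · rintro ⟨hR, -, -⟩
        exact (hRa y).1 hR
      · rintro rfl
        exact ⟨(hRa _).2 rfl, mem_of_mem_nhds hU'n, mem_of_mem_nhds hV'n⟩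
  · rintro ⟨S, hSc, haD, hbE, hDE, hSb, hSa⟩
    set D := {x : X | ∃ y : X, (x, y) ∈ S} with hD
    set E := {y : X | ∃ x : X, (x, y) ∈ S} with hE
    set C := (interior D ∪ interior E)ᶜ with hC
    have hCc : IsClosed C := (isOpen_interior.union isOpen_interior).isClosed_compl
    refine ⟨S ∪ Prod.swap ⁻¹' S ∪ C ×ˢ C,
      (hSc.union (hSc.preimage continuous_swap)).union (hCc.prod hCc), ?_, ?_, ?_, ?_⟩
    · rintro ⟨x, y⟩ ((h | h) | h)
      · exact Or.inl (Or.inr h)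
      · exact Or.inl (Or.inl h)
      · exact Or.inr ⟨h.2, h.1⟩
    · intro x
      by_cases hx : x ∈ interior D ∪ interior E
      · rcases hx with hx | hx
        · obtain ⟨y, hy⟩ := interior_subset hx
          exact ⟨y, Or.inl (Or.inl hy)⟩
        · obtain ⟨z, hz⟩ := interior_subset hx
          exact ⟨z, Or.inl (Or.inr hz)⟩
      · exact ⟨x, Or.inr ⟨hx, hx⟩⟩
    · intro x
      constructor
      · rintro ((h | h) | h)
        · exact (hSa x).1 h
        · exact absurd (hDE.ne_of_mem (interior_subset haD) ⟨x, h⟩ rfl) (fun q => q)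
        · exact absurd (Or.inl haD) h.1
      · rintro rfl; exact Or.inl (Or.inl ((hSa _).2 rfl))
    · intro x
      constructor
      · rintro ((h | h) | h)
        · exact absurd (hDE.ne_of_mem ⟨x, h⟩ (interior_subset hbE) rfl) (fun q => q)
        · exact (hSb x).1 h
        · exact absurd (Or.inr hbE) h.1
      · rintro rfl; exact Or.inl (Or.inr ((hSb _).2 rfl))
end

section
/- If a ≡ₚ b in a compact Hausdorff space X, then the neighborhood filters of a and b (ordered by reverse inclusion) are Tukey equivalent. -/
universe u

lemma pinEquiv_symm {X : Type u} [TopologicalSpace X] {a b : X} (h : PinEquiv a b) :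
    PinEquiv b a := by
  obtain ⟨Y, _, _, _, f, g, hc, hs, hg⟩ := h
  refine ⟨Y, ‹_›, ‹_›, ‹_›, f, g.symm, hc, hs, ?_⟩
  rw [← hg, Set.image_image]
  simp

lemma pinEquiv_aux {X : Type u} [TopologicalSpace X] [CompactSpace X] [T2Space X]
    {a b : X} (h : PinEquiv a b) :
    ∃ F : Set X → Set X,
        (∀ N : Set X, b ∈ interior N → a ∈ interior (F N)) ∧
        ∀ M : Set X, a ∈ interior M → ∃ N₀ : Set X, b ∈ interior N₀ ∧
          ∀ N : Set X, b ∈ interior N → N ⊆ N₀ → F N ⊆ M := by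
  obtain ⟨Y, _, _, _, f, g, hc, hs, hg⟩ := h
  have hclosed : IsClosedMap f := hc.isClosedMap
  refine ⟨fun N => (f '' ((g ⁻¹' (f ⁻¹' interior N))ᶜ))ᶜ, ?_, ?_⟩
  · intro N hb
    have hopen : IsOpen ((f '' ((g ⁻¹' (f ⁻¹' interior N))ᶜ))ᶜ) :=
      (hclosed _
        (((isOpen_interior.preimage hc).preimage g.continuous).isClosed_compl)).isOpen_compl
    rw [hopen.interior_eq]
    rintro ⟨y, hy, hfy⟩
    apply hy
    have h1 : y ∈ f ⁻¹' {a} := hfy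
    have h2 : g y ∈ f ⁻¹' {b} := hg ▸ Set.mem_image_of_mem g h1
    have h3 : f (g y) = b := h2
    simp only [Set.mem_preimage, h3]
    exact hb
  · intro M hM
    set C := f '' ((g : Y → Y) '' (f ⁻¹' (interior M)ᶜ)) with hC
    have hCclosed : IsClosed C :=
      hclosed _ (g.isClosedMap _ ((isOpen_interior.preimage hc).isClosed_compl))
    have hbC : b ∉ C := by
      rintro ⟨z, ⟨y, hy, rfl⟩, hfz⟩
      have h1 : g y ∈ f ⁻¹' {b} := hfz
      rw [← hg] at h1
      obtain ⟨y', hy', he⟩ := h1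
      cases g.injective he
      exact hy (show f y ∈ interior M by rw [show f y = a from hy']; exact hM)
    refine ⟨Cᶜ, ?_, ?_⟩
    · rw [hCclosed.isOpen_compl.interior_eq]; exact hbC
    · intro N hbN hNsub x hxF
      by_contra hxM
      apply hxF
      obtain ⟨y, rfl⟩ := hs x
      refine ⟨y, ?_, rfl⟩
      intro hy
      have h1 : f (g y) ∈ C :=
        ⟨g y, ⟨y, fun hyM => hxM (interior_subset hyM), rfl⟩, rfl⟩
      have h2 : f (g y) ∈ N := interior_subset hy
      exact hNsub h2 h1

/-- If `a` and `b` are pin equivalent in a compact Hausdorff space, then their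
neighborhood filters (ordered by reverse inclusion `⊇`) are Tukey equivalent. -/
theorem pinEquiv_tukey_equiv {X : Type u} [TopologicalSpace X] [CompactSpace X]
    [T2Space X] {a b : X} (h : PinEquiv a b) :
    (∃ f : Set X → Set X,
        (∀ N : Set X, b ∈ interior N → a ∈ interior (f N)) ∧
        ∀ M : Set X, a ∈ interior M → ∃ N₀ : Set X, b ∈ interior N₀ ∧
          ∀ N : Set X, b ∈ interior N → N ⊆ N₀ → f N ⊆ M) ∧
    (∃ g : Set X → Set X,
        (∀ M : Set X, a ∈ interior M → b ∈ interior (g M)) ∧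
        ∀ N : Set X, b ∈ interior N → ∃ M₀ : Set X, a ∈ interior M₀ ∧
          ∀ M : Set X, a ∈ interior M → M ⊆ M₀ → g M ⊆ N) :=
  ⟨pinEquiv_aux h, pinEquiv_aux (pinEquiv_symm h)⟩
end

section
/- In a compact Hausdorff space X, if a ≡ₚ b and a is not a weak P-point, then b is not a weak P-point. -/
universe u

/-- In a compact Hausdorff space, if `a ≡ₚ b` and `a` is not a weak P-point, then
neither is `b`. -/
theorem pinEquiv_not_weakPPoint {X : Type u} [TopologicalSpace X] [CompactSpace X]
    [T2Space X] {a b : X} (h : PinEquiv a b)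
    (ha : ∃ C : Set X, C.Countable ∧ a ∉ C ∧ a ∈ closure C) :
    ∃ D : Set X, D.Countable ∧ b ∉ D ∧ b ∈ closure D := by
  obtain ⟨Y, _, _, _, f, g, hfc, hfs, hg⟩ := h
  obtain ⟨C, hCc, haC, hacl⟩ := ha
  set s : X → Y := Function.surjInv hfs with hs_def
  have hs : ∀ x, f (s x) = x := Function.surjInv_eq hfs
  set S : Set Y := s '' C with hS_def
  refine ⟨f '' ((g : Y → Y) '' S), ((hCc.image s).image _).image _, ?_, ?_⟩
  · rintro ⟨-, ⟨-, ⟨c, hcC, rfl⟩, rfl⟩, hb⟩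
    have : g (s c) ∈ f ⁻¹' {b} := hb
    rw [← hg] at this
    obtain ⟨y, hy, hyg⟩ := this
    have : y = s c := g.injective hyg
    subst this
    have : f (s c) = a := hy
    rw [hs c] at this
    exact haC (this ▸ hcC)
  · -- a ∈ f '' closure S
    have hclosed : IsClosed (f '' closure S) :=
      (hfc.isClosedMap _ isClosed_closure)
    have hsub : closure C ⊆ f '' closure S := by
      apply closure_minimal _ hclosed
      intro c hc
      exact ⟨s c, subset_closure ⟨c, hc, rfl⟩, hs c⟩
    obtain ⟨y, hyS, hya⟩ := hsub hacl
    have hgy : g y ∈ closure ((g : Y → Y) '' S) := by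
      rw [← Homeomorph.image_closure]
      exact ⟨y, hyS, rfl⟩
    have hfgy : f (g y) = b := by
      have : g y ∈ f ⁻¹' {b} := by
        rw [← hg]; exact ⟨y, by simp [Set.mem_preimage, hya], rfl⟩
      exact this
    have := image_closure_subset_closure_image (s := (g : Y → Y) '' S) hfc
      ⟨g y, hgy, rfl⟩
    rwa [hfgy] at this
end

section
/- Let X be a compact Hausdorff space and let a ≠ b have independent neighborhood subbases 𝒜 and ℬ respectively with a bijection between them. Then a ≡ₚ b. -/
universe u

/-- A family of sets is independent if for all finite nonempty disjoint subfamilies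
`F`, `G`, the intersection of `F` is not covered by the union of `G`. -/
def IndependentFamily {X : Type u} (E : Set (Set X)) : Prop :=
  ∀ F G : Set (Set X), F ⊆ E → G ⊆ E → F.Finite → G.Finite → F.Nonempty → G.Nonempty →
    Disjoint F G → ¬ (⋂₀ F ⊆ ⋃₀ G)

open Set Filter Topology
open scoped Classical

section PinAux


variable {X : Type*} [TopologicalSpace X]

/-- Pattern compatibility predicate: `x` is compatible with the boolean pattern `ε`
relative to the family `S`. -/
def PhiPat {I : Type*} (S : I → Set X) (x : X) (ε : I → Bool) : Prop :=
  ∀ F G : Finset I, (∀ i ∈ F, ε i = true) → (∀ i ∈ G, ε i = false) →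
    x ∈ closure ((⋂ i ∈ F, S i) ∩ (⋂ i ∈ G, (S i)ᶜ))

lemma phiPat_ultra {I : Type*} (S : I → Set X) (x : X) (u : Ultrafilter X)
    (hu : ↑u ≤ 𝓝 x) :
    PhiPat S x (fun i => if S i ∈ u then true else false) := by
  intro F G hF hG
  have hFm : ∀ i ∈ F, S i ∈ u := by
    intro i hi
    have h := hF i hi
    by_cases hmem : S i ∈ u
    · exact hmem
    · simp [hmem] at h
  have hGm : ∀ i ∈ G, (S i)ᶜ ∈ u := by
    intro i hi
    have h := hG i hi
    by_cases hmem : S i ∈ u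
    · simp [hmem] at h
    · exact (Ultrafilter.compl_mem_iff_notMem).mpr hmem
  have hM : ((⋂ i ∈ F, S i) ∩ (⋂ i ∈ G, (S i)ᶜ)) ∈ u :=
    Filter.inter_mem ((Filter.biInter_finset_mem F).mpr hFm)
      ((Filter.biInter_finset_mem G).mpr hGm)
  rw [mem_closure_iff_nhds]
  intro t ht
  exact Ultrafilter.nonempty_of_mem (Filter.inter_mem (hu ht) hM)

lemma phiPat_top {I : Type*} (S : I → Set X) (p : X) (hp : ∀ i, p ∈ S i) :
    PhiPat S p (fun _ => true) := by
  intro F G hF hG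
  rcases G.eq_empty_or_nonempty with rfl | ⟨j, hj⟩
  · refine subset_closure ⟨?_, by simp⟩
    exact mem_iInter₂.mpr fun i _ => hp i
  · exact absurd (hG j hj) (by simp)

lemma phiPat_bot {I : Type*} (S : I → Set X) (p : X) (O : Set X) (hpO : p ∈ O)
    (hO : ∀ i, O ⊆ (S i)ᶜ) : PhiPat S p (fun _ => false) := by
  intro F G hF hG
  rcases F.eq_empty_or_nonempty with rfl | ⟨j, hj⟩
  · refine subset_closure ⟨by simp, ?_⟩
    exact mem_iInter₂.mpr fun i _ => hO i hpO
  · exact absurd (hF j hj) (by simp)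

lemma exists_phiPat {I : Type*} [CompactSpace X] (S : I → Set X) (ε : I → Bool)
    (hne : ∀ F G : Finset I, (∀ i ∈ F, ε i = true) → (∀ i ∈ G, ε i = false) →
      ((⋂ i ∈ F, S i) ∩ (⋂ i ∈ G, (S i)ᶜ)).Nonempty) :
    ∃ y, PhiPat S y ε := by
  classical
  let ι := {q : Finset I × Finset I // (∀ i ∈ q.1, ε i = true) ∧ (∀ i ∈ q.2, ε i = false)}
  haveI : Nonempty ι := ⟨⟨(∅, ∅), by simp, by simp⟩⟩
  let D : ι → Set X := fun q =>
    closure ((⋂ i ∈ q.1.1, S i) ∩ (⋂ i ∈ q.1.2, (S i)ᶜ))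
  have hmono : ∀ (q r : ι), q.1.1 ⊆ r.1.1 → q.1.2 ⊆ r.1.2 → D r ⊆ D q := by
    intro q r h1 h2
    apply closure_mono
    refine inter_subset_inter ?_ ?_
    · exact biInter_subset_biInter_left h1
    · exact biInter_subset_biInter_left h2
  have hdir : Directed (· ⊇ ·) D := by
    intro q r
    refine ⟨⟨(q.1.1 ∪ r.1.1, q.1.2 ∪ r.1.2), ?_, ?_⟩, ?_, ?_⟩
    · intro i hi
      rcases Finset.mem_union.mp hi with h | h
      · exact q.2.1 i h
      · exact r.2.1 i h
    · intro i hi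
      rcases Finset.mem_union.mp hi with h | h
      · exact q.2.2 i h
      · exact r.2.2 i h
    · exact hmono q _ Finset.subset_union_left Finset.subset_union_left
    · exact hmono r _ Finset.subset_union_right Finset.subset_union_right
  have hn : ∀ q : ι, (D q).Nonempty := fun q =>
    (hne q.1.1 q.1.2 q.2.1 q.2.2).mono subset_closure
  have hy := IsCompact.nonempty_iInter_of_directed_nonempty_isCompact_isClosed D hdir hn
    (fun q => isClosed_closure.isCompact) (fun q => isClosed_closure)
  obtain ⟨y, hy⟩ := hy
  refine ⟨y, ?_⟩
  intro F G hF hG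
  exact mem_iInter.mp hy ⟨(F, G), hF, hG⟩

lemma isClosed_phiPat {α : Type*} [TopologicalSpace α] {I : Type*} (S : I → Set X)
    (πX : α → X) (πC : α → I → Bool) (hπ : Continuous πX) (hρ : Continuous πC) :
    IsClosed {p | PhiPat S (πX p) (πC p)} := by
  have heq : {p | PhiPat S (πX p) (πC p)} =
      ⋂ (F : Finset I) (G : Finset I),
        ((πC ⁻¹' {ε | ∀ i ∈ F, ε i = true})ᶜ ∪
          ((πC ⁻¹' {ε | ∀ i ∈ G, ε i = false})ᶜ ∪
            πX ⁻¹' closure ((⋂ i ∈ F, S i) ∩ (⋂ i ∈ G, (S i)ᶜ)))) := by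
    ext p
    simp only [mem_setOf_eq, mem_iInter, mem_union, mem_compl_iff, mem_preimage, PhiPat]
    constructor
    · intro h F G
      by_cases h1 : ∀ i ∈ F, πC p i = true
      · by_cases h2 : ∀ i ∈ G, πC p i = false
        · exact Or.inr (Or.inr (h F G h1 h2))
        · exact Or.inr (Or.inl h2)
      · exact Or.inl h1
    · intro h F G h1 h2
      rcases h F G with h' | h' | h'
      · exact absurd h1 h'
      · exact absurd h2 h'
      · exact h'
  rw [heq]
  refine isClosed_iInter fun F => isClosed_iInter fun G => ?_
  have hop1 : IsOpen {ε : I → Bool | ∀ i ∈ F, ε i = true} := by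
    have : {ε : I → Bool | ∀ i ∈ F, ε i = true} = ⋂ i ∈ F, (fun ε : I → Bool => ε i) ⁻¹' {true} := by
      ext ε; simp
    rw [this]
    exact isOpen_biInter_finset fun i _ => (continuous_apply i).isOpen_preimage _ (isOpen_discrete _)
  have hop2 : IsOpen {ε : I → Bool | ∀ i ∈ G, ε i = false} := by
    have : {ε : I → Bool | ∀ i ∈ G, ε i = false} = ⋂ i ∈ G, (fun ε : I → Bool => ε i) ⁻¹' {false} := by
      ext ε; simp
    rw [this]
    exact isOpen_biInter_finset fun i _ => (continuous_apply i).isOpen_preimage _ (isOpen_discrete _)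
  refine IsClosed.union ?_ (IsClosed.union ?_ ?_)
  · exact (hop1.preimage hρ).isClosed_compl
  · exact (hop2.preimage hρ).isClosed_compl
  · exact isClosed_closure.preimage hπ

lemma eq_of_mem_closures {Y : Type*} [TopologicalSpace Y] [CompactSpace Y] [T2Space Y]
    {p y : Y} (𝒮 : Set (Set Y)) (hgen : Filter.generate 𝒮 = 𝓝 p)
    (hy : ∀ t : Set (Set Y), t ⊆ 𝒮 → t.Finite → y ∈ closure (⋂₀ t)) : y = p := by
  by_contra hne
  obtain ⟨Uy, Up, hUyo, hUpo, hyU, hpU, hd⟩ := t2_separation hne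
  obtain ⟨N, hN, hNc, hNU⟩ := exists_mem_nhds_isClosed_subset (hUpo.mem_nhds hpU)
  rw [← hgen, Filter.mem_generate_iff] at hN
  obtain ⟨t, hts, htf, htN⟩ := hN
  have hyN : y ∈ N := closure_minimal htN hNc (hy t hts htf)
  exact Set.disjoint_left.mp hd hyU (hNU hyN)

end PinAux




lemma cell_nonempty {Y : Type u} {I : Type*} (𝒮 : Set (Set Y)) (hind : IndependentFamily 𝒮)
    (S : I → Set Y) (hmem : ∀ i, S i ∈ 𝒮) (hinj : Function.Injective S)
    (p : Y) (hp : ∀ i, p ∈ S i)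
    (F G : Finset I) (hF : F.Nonempty) (hd : ∀ i ∈ F, ∀ j ∈ G, i ≠ j) :
    ((⋂ i ∈ F, S i) ∩ (⋂ i ∈ G, (S i)ᶜ)).Nonempty := by
  rcases G.eq_empty_or_nonempty with rfl | hG
  · exact ⟨p, mem_iInter₂.mpr fun i _ => hp i, by simp⟩
  · have hnot := hind (S '' ↑F) (S '' ↑G)
      (by rintro s ⟨i, _, rfl⟩; exact hmem i)
      (by rintro s ⟨i, _, rfl⟩; exact hmem i)
      (F.finite_toSet.image S) (G.finite_toSet.image S)
      ((Finset.coe_nonempty.mpr hF).image S) ((Finset.coe_nonempty.mpr hG).image S)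
      (by
        rw [Set.disjoint_left]
        rintro s ⟨i, hi, rfl⟩ ⟨j, hj, hji⟩
        exact hd i hi j hj (hinj hji.symm))
    obtain ⟨z, hz1, hz2⟩ := Set.not_subset.mp hnot
    refine ⟨z, mem_iInter₂.mpr fun i hi => hz1 (S i) ⟨i, hi, rfl⟩, mem_iInter₂.mpr ?_⟩
    intro i hi
    intro hzi
    exact hz2 ⟨S i, ⟨i, hi, rfl⟩, hzi⟩

/-- The partner lemma: given two "localized" families, a point of the `S`-side
hull `W₁` admits a mirror partner on the `T`-side. -/
lemma partner_lemma {Y : Type u} [TopologicalSpace Y] [CompactSpace Y] {I : Type*}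
    (S T : I → Set Y) (W₁ W₂ : Set Y) (hW₂c : IsClosed W₂) (hdis : Disjoint W₁ W₂)
    (J : Finset I) (hJne : J.Nonempty)
    (hW₁ : W₁ = closure (⋂ i ∈ J, S i))
    (hJT : (⋂ i ∈ J, T i) ⊆ W₂)
    (hTcell : ∀ F G : Finset I, F.Nonempty → (∀ i ∈ F, ∀ j ∈ G, i ≠ j) →
      ((⋂ i ∈ F, T i) ∩ (⋂ i ∈ G, (T i)ᶜ)).Nonempty)
    (x : Y) (hx : x ∈ W₁) :
    ∃ y ε, PhiPat (fun i => S i ∩ W₁) x ε ∧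
      PhiPat (fun i => T i ∩ W₂) x (fun _ => false) ∧
      PhiPat (fun i => T i ∩ W₂) y ε ∧
      PhiPat (fun i => S i ∩ W₁) y (fun _ => false) := by
  have hxcl : x ∈ closure (⋂ i ∈ J, S i) := hW₁ ▸ hx
  have hclu : ClusterPt x (𝓟 (⋂ i ∈ J, S i)) := mem_closure_iff_clusterPt.mp hxcl
  haveI : (𝓝 x ⊓ 𝓟 (⋂ i ∈ J, S i)).NeBot := hclu
  obtain ⟨u, hu⟩ := Filter.exists_ultrafilter_le (𝓝 x ⊓ 𝓟 (⋂ i ∈ J, S i))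
  have hu𝓝 : ↑u ≤ 𝓝 x := hu.trans inf_le_left
  have huS : (⋂ i ∈ J, S i) ∈ u := hu (mem_inf_of_right (mem_principal_self _))
  set ε : I → Bool := fun i => if S i ∩ W₁ ∈ u then true else false with hεdef
  have hεJ : ∀ i ∈ J, ε i = true := by
    intro i hi
    have : S i ∩ W₁ ∈ u := by
      refine Filter.mem_of_superset huS ?_
      intro z hz
      exact ⟨mem_iInter₂.mp hz i hi, hW₁ ▸ subset_closure hz⟩
    simp [hεdef, this]
  have c1 : PhiPat (fun i => S i ∩ W₁) x ε := phiPat_ultra _ x u hu𝓝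
  have hTnot : ∀ i, T i ∩ W₂ ∉ u := by
    intro i h
    have hne := Ultrafilter.nonempty_of_mem (Filter.inter_mem huS h)
    obtain ⟨z, hz1, hz2, hz3⟩ := hne
    exact Set.disjoint_left.mp hdis (hW₁ ▸ subset_closure hz1) hz3
  have c2 : PhiPat (fun i => T i ∩ W₂) x (fun _ => false) := by
    have h := phiPat_ultra (fun i => T i ∩ W₂) x u hu𝓝
    have : (fun i => if T i ∩ W₂ ∈ u then true else false) = (fun _ : I => false) := by
      funext i; simp [hTnot i]
    rwa [this] at h
  have hne : ∀ F G : Finset I, (∀ i ∈ F, ε i = true) → (∀ i ∈ G, ε i = false) →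
      ((⋂ i ∈ F, (fun i => T i ∩ W₂) i) ∩ (⋂ i ∈ G, ((fun i => T i ∩ W₂) i)ᶜ)).Nonempty := by
    intro F G hF hG
    have hdisj : ∀ i ∈ F ∪ J, ∀ j ∈ G, i ≠ j := by
      intro i hi j hj hij
      subst hij
      have htrue : ε i = true := by
        rcases Finset.mem_union.mp hi with h | h
        · exact hF i h
        · exact hεJ i h
      rw [hG i hj] at htrue
      exact Bool.noConfusion htrue
    obtain ⟨z, hz1, hz2⟩ := hTcell (F ∪ J) G ⟨hJne.choose, Finset.mem_union_right _ hJne.choose_spec⟩ hdisj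
    have hzW₂ : z ∈ W₂ := hJT (mem_iInter₂.mpr fun i hi =>
      mem_iInter₂.mp hz1 i (Finset.mem_union_right _ hi))
    refine ⟨z, mem_iInter₂.mpr fun i hi =>
      ⟨mem_iInter₂.mp hz1 i (Finset.mem_union_left _ hi), hzW₂⟩, mem_iInter₂.mpr ?_⟩
    intro i hi hzi
    exact (mem_iInter₂.mp hz2 i hi) hzi.1
  obtain ⟨y, c3⟩ := exists_phiPat (fun i => T i ∩ W₂) ε hne
  have hyW₂ : y ∈ W₂ := by
    have h := c3 J ∅ hεJ (by simp)
    have hsub : closure ((⋂ i ∈ J, T i ∩ W₂) ∩ ⋂ i ∈ (∅ : Finset I), (T i ∩ W₂)ᶜ) ⊆ W₂ := by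
      refine closure_minimal ?_ hW₂c
      intro z hz
      obtain ⟨j, hj⟩ := hJne
      exact (mem_iInter₂.mp hz.1 j hj).2
    exact hsub h
  have c4 : PhiPat (fun i => S i ∩ W₁) y (fun _ => false) := by
    refine phiPat_bot _ y W₂ hyW₂ ?_
    intro i z hz hzi
    exact Set.disjoint_left.mp hdis hzi.2 hz
  exact ⟨y, ε, c1, c2, c3, c4⟩


/-- If `a ≠ b` have independent neighborhood subbases `𝒜` and `ℬ` that are in bijection,
then `a ≡ₚ b`. -/
theorem pinEquiv_of_indep_subbases {X : Type u} [TopologicalSpace X] [CompactSpace X]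
    [T2Space X] {a b : X} (hab : a ≠ b) (𝒜 ℬ : Set (Set X))
    (hA : Filter.generate 𝒜 = nhds a) (hB : Filter.generate ℬ = nhds b)
    (hAi : IndependentFamily 𝒜) (hBi : IndependentFamily ℬ)
    (hbij : Nonempty (𝒜 ≃ ℬ)) : PinEquiv a b := by
  classical
  obtain ⟨e⟩ := hbij
  set A : ↥𝒜 → Set X := fun i => i.1 with hAdef
  set B : ↥𝒜 → Set X := fun i => (e i).1 with hBdef
  have hAinj : Function.Injective A := fun i j h => Subtype.ext h
  have hBinj : Function.Injective B := fun i j h => e.injective (Subtype.ext h)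
  have hAmem : ∀ i, A i ∈ 𝓝 a := by
    intro i
    rw [← hA]
    exact Filter.mem_generate_iff.mpr
      ⟨{i.1}, by simpa using i.2, Set.finite_singleton _, by simp [hAdef]⟩
  have hBmem : ∀ i, B i ∈ 𝓝 b := by
    intro i
    rw [← hB]
    exact Filter.mem_generate_iff.mpr
      ⟨{(e i).1}, by simpa using (e i).2, Set.finite_singleton _, by simp [hBdef]⟩
  have haA : ∀ i, a ∈ A i := fun i => mem_of_mem_nhds (hAmem i)
  have hbB : ∀ i, b ∈ B i := fun i => mem_of_mem_nhds (hBmem i)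
  obtain ⟨U, V, hUo, hVo, haU, hbV, hUV⟩ := t2_separation hab
  obtain ⟨Ka, hKa, hKac, hKaU⟩ := exists_mem_nhds_isClosed_subset (hUo.mem_nhds haU)
  obtain ⟨Kb, hKb, hKbc, hKbV⟩ := exists_mem_nhds_isClosed_subset (hVo.mem_nhds hbV)
  rw [← hA, Filter.mem_generate_iff] at hKa
  obtain ⟨ta, htaA, htaf, htaK⟩ := hKa
  rw [← hB, Filter.mem_generate_iff] at hKb
  obtain ⟨tb, htbB, htbf, htbK⟩ := hKb
  have hJfin : {i : ↥𝒜 | i.1 ∈ ta ∨ (e i).1 ∈ tb}.Finite := by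
    have h1 : ((fun i : ↥𝒜 => i.1) ⁻¹' ta).Finite :=
      Set.Finite.preimage (Set.injOn_of_injective hAinj) htaf
    have h2 : ((fun i : ↥𝒜 => (e i).1) ⁻¹' tb).Finite :=
      Set.Finite.preimage (Set.injOn_of_injective hBinj) htbf
    refine (h1.union h2).subset ?_
    rintro i (h | h)
    · exact Or.inl h
    · exact Or.inr h
  set Jf : Finset ↥𝒜 := hJfin.toFinset with hJfdef
  have hJmem : ∀ i : ↥𝒜, i ∈ Jf ↔ (i.1 ∈ ta ∨ (e i).1 ∈ tb) := fun i => hJfin.mem_toFinset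
  set Wa : Set X := closure (⋂ i ∈ Jf, A i) with hWadef
  set Wb : Set X := closure (⋂ i ∈ Jf, B i) with hWbdef
  have hJA : (⋂ i ∈ Jf, A i) ⊆ ⋂₀ ta := by
    intro z hz s hs
    exact Set.mem_iInter₂.mp hz ⟨s, htaA hs⟩ ((hJmem _).mpr (Or.inl hs))
  have hJB : (⋂ i ∈ Jf, B i) ⊆ ⋂₀ tb := by
    intro z hz s hs
    have hsB : s ∈ ℬ := htbB hs
    have hBi : B (e.symm ⟨s, hsB⟩) = s := by
      show ((e (e.symm ⟨s, hsB⟩)) : Set X) = s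
      rw [e.apply_symm_apply]
    have hiJ : e.symm ⟨s, hsB⟩ ∈ Jf := by
      refine (hJmem _).mpr (Or.inr ?_)
      show ((e (e.symm ⟨s, hsB⟩)) : Set X) ∈ tb
      rw [e.apply_symm_apply]
      exact hs
    have := Set.mem_iInter₂.mp hz _ hiJ
    rwa [hBi] at this
  have hWaU : Wa ⊆ U := (closure_minimal (hJA.trans htaK) hKac).trans hKaU
  have hWbV : Wb ⊆ V := (closure_minimal (hJB.trans htbK) hKbc).trans hKbV
  have hWdis : Disjoint Wa Wb := hUV.mono hWaU hWbV
  have hWacl : IsClosed Wa := isClosed_closure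
  have hWbcl : IsClosed Wb := isClosed_closure
  have hJne : Jf.Nonempty := by
    rcases Set.eq_empty_or_nonempty ta with rfl | ⟨s, hs⟩
    · exfalso
      have huniv : (Set.univ : Set X) ⊆ Ka := by simpa using htaK
      exact Set.disjoint_left.mp hUV (hKaU (huniv (Set.mem_univ b))) hbV
    · exact ⟨⟨s, htaA hs⟩, (hJmem _).mpr (Or.inl hs)⟩
  have haJ : a ∈ ⋂ i ∈ Jf, A i := Set.mem_iInter₂.mpr fun i _ => haA i
  have hbJ : b ∈ ⋂ i ∈ Jf, B i := Set.mem_iInter₂.mpr fun i _ => hbB i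
  have haWa : a ∈ Wa := subset_closure haJ
  have hbWb : b ∈ Wb := subset_closure hbJ
  have haiWa : a ∈ interior Wa := by
    have h : (⋂ i ∈ Jf, A i) ∈ 𝓝 a := (Filter.biInter_finset_mem Jf).mpr fun i _ => hAmem i
    exact mem_interior_iff_mem_nhds.mpr (Filter.mem_of_superset h subset_closure)
  have hbiWb : b ∈ interior Wb := by
    have h : (⋂ i ∈ Jf, B i) ∈ 𝓝 b := (Filter.biInter_finset_mem Jf).mpr fun i _ => hBmem i
    exact mem_interior_iff_mem_nhds.mpr (Filter.mem_of_superset h subset_closure)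
  set A' : ↥𝒜 → Set X := fun i => A i ∩ Wa with hA'def
  set B' : ↥𝒜 → Set X := fun i => B i ∩ Wb with hB'def
  have haA' : ∀ i, a ∈ interior (A' i) := by
    intro i
    rw [hA'def]
    simp only [interior_inter]
    exact ⟨mem_interior_iff_mem_nhds.mpr (hAmem i), haiWa⟩
  have hbB' : ∀ i, b ∈ interior (B' i) := by
    intro i
    rw [hB'def]
    simp only [interior_inter]
    exact ⟨mem_interior_iff_mem_nhds.mpr (hBmem i), hbiWb⟩
  -- forcing lemmas
  have hsingleInter : ∀ (S : ↥𝒜 → Set X) (x : X) (i : ↥𝒜),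
      x ∈ closure ((⋂ j ∈ ({i} : Finset ↥𝒜), S j) ∩ ⋂ j ∈ (∅ : Finset ↥𝒜), (S j)ᶜ) →
      x ∈ closure (S i) := by
    intro S x i h
    refine closure_mono ?_ h
    intro z hz
    exact Set.mem_iInter₂.mp hz.1 i (Finset.mem_singleton_self i)
  have hsingleCompl : ∀ (S : ↥𝒜 → Set X) (x : X) (i : ↥𝒜),
      x ∈ closure ((⋂ j ∈ (∅ : Finset ↥𝒜), S j) ∩ ⋂ j ∈ ({i} : Finset ↥𝒜), (S j)ᶜ) →
      x ∈ closure ((S i)ᶜ) := by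
    intro S x i h
    refine closure_mono ?_ h
    intro z hz
    exact Set.mem_iInter₂.mp hz.2 i (Finset.mem_singleton_self i)
  have hforceA1 : ∀ ε : ↥𝒜 → Bool, PhiPat A' a ε → ε = fun _ => true := by
    intro ε hφ
    funext i
    by_contra hne'
    have hfalse : ε i = false := by revert hne'; cases ε i <;> simp
    have h := hsingleCompl A' a i (hφ ∅ {i} (by simp) (by simpa using hfalse))
    rw [closure_compl] at h
    exact h (haA' i)
  have hforceBb : ∀ δ : ↥𝒜 → Bool, PhiPat B' b δ → δ = fun _ => true := by
    intro δ hφ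
    funext i
    by_contra hne'
    have hfalse : δ i = false := by revert hne'; cases δ i <;> simp
    have h := hsingleCompl B' b i (hφ ∅ {i} (by simp) (by simpa using hfalse))
    rw [closure_compl] at h
    exact h (hbB' i)
  have hforceBa : ∀ δ : ↥𝒜 → Bool, PhiPat B' a δ → δ = fun _ => false := by
    intro δ hφ
    funext i
    by_contra hne'
    have htrue : δ i = true := by revert hne'; cases δ i <;> simp
    have h := hsingleInter B' a i (hφ {i} ∅ (by simpa using htrue) (by simp))
    have h2 : a ∈ Wb := closure_minimal Set.inter_subset_right hWbcl h
    exact Set.disjoint_left.mp hWdis haWa h2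
  have hforceAb : ∀ ε : ↥𝒜 → Bool, PhiPat A' b ε → ε = fun _ => false := by
    intro ε hφ
    funext i
    by_contra hne'
    have htrue : ε i = true := by revert hne'; cases ε i <;> simp
    have h := hsingleInter A' b i (hφ {i} ∅ (by simpa using htrue) (by simp))
    have h2 : b ∈ Wa := closure_minimal Set.inter_subset_right hWacl h
    exact Set.disjoint_left.mp hWdis h2 hbWb
  have hforceB1 : ∀ y : X, PhiPat B' y (fun _ => true) → y = b := by
    intro y hφ
    refine eq_of_mem_closures ℬ hB ?_
    intro t hts htf
    have hfin : ((fun i : ↥𝒜 => B i) ⁻¹' t).Finite :=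
      Set.Finite.preimage (Set.injOn_of_injective hBinj) htf
    have h := hφ hfin.toFinset ∅ (by simp) (by simp)
    refine closure_mono ?_ h
    intro z hz s hs
    have hsB : s ∈ ℬ := hts hs
    have hBi : B (e.symm ⟨s, hsB⟩) = s := by
      show ((e (e.symm ⟨s, hsB⟩)) : Set X) = s
      rw [e.apply_symm_apply]
    have hiF : e.symm ⟨s, hsB⟩ ∈ hfin.toFinset := by
      rw [Set.Finite.mem_toFinset]
      show B (e.symm ⟨s, hsB⟩) ∈ t
      rw [hBi]; exact hs
    have := (Set.mem_iInter₂.mp hz.1 _ hiF).1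
    rwa [hBi] at this
  have hforceA1' : ∀ y : X, PhiPat A' y (fun _ => true) → y = a := by
    intro y hφ
    refine eq_of_mem_closures 𝒜 hA ?_
    intro t hts htf
    have hfin : ((fun i : ↥𝒜 => A i) ⁻¹' t).Finite :=
      Set.Finite.preimage (Set.injOn_of_injective hAinj) htf
    have h := hφ hfin.toFinset ∅ (by simp) (by simp)
    refine closure_mono ?_ h
    intro z hz s hs
    have hsA : s ∈ 𝒜 := hts hs
    have hiF : (⟨s, hsA⟩ : ↥𝒜) ∈ hfin.toFinset := by
      rw [Set.Finite.mem_toFinset]; exact hs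
    exact (Set.mem_iInter₂.mp hz.1 _ hiF).1
  -- memberships of the special points
  have hφa1 : PhiPat A' a (fun _ => true) := phiPat_top _ a (fun i => ⟨haA i, haWa⟩)
  have hφb1 : PhiPat B' b (fun _ => true) := phiPat_top _ b (fun i => ⟨hbB i, hbWb⟩)
  have hφa0 : PhiPat B' a (fun _ => false) := by
    refine phiPat_bot _ a Wa haWa ?_
    intro i z hz hzi
    exact Set.disjoint_left.mp hWdis hz hzi.2
  have hφb0 : PhiPat A' b (fun _ => false) := by
    refine phiPat_bot _ b Wb hbWb ?_
    intro i z hz hzi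
    exact Set.disjoint_left.mp hWdis hzi.2 hz
  -- the space Z
  set Z : Set (X × X × (↥𝒜 → Bool) × (↥𝒜 → Bool)) :=
    {p | PhiPat A' p.1 p.2.2.1 ∧ PhiPat B' p.1 p.2.2.2 ∧
      PhiPat B' p.2.1 p.2.2.1 ∧ PhiPat A' p.2.1 p.2.2.2} with hZdef
  have hZc : IsClosed Z := by
    have h1 := isClosed_phiPat (α := X × X × (↥𝒜 → Bool) × (↥𝒜 → Bool)) A'
      (fun p => p.1) (fun p => p.2.2.1) continuous_fst (continuous_snd.snd.fst)
    have h2 := isClosed_phiPat (α := X × X × (↥𝒜 → Bool) × (↥𝒜 → Bool)) B'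
      (fun p => p.1) (fun p => p.2.2.2) continuous_fst (continuous_snd.snd.snd)
    have h3 := isClosed_phiPat (α := X × X × (↥𝒜 → Bool) × (↥𝒜 → Bool)) B'
      (fun p => p.2.1) (fun p => p.2.2.1) continuous_snd.fst (continuous_snd.snd.fst)
    have h4 := isClosed_phiPat (α := X × X × (↥𝒜 → Bool) × (↥𝒜 → Bool)) A'
      (fun p => p.2.1) (fun p => p.2.2.2) continuous_snd.fst (continuous_snd.snd.snd)
    exact IsClosed.inter h1 (IsClosed.inter h2 (IsClosed.inter h3 h4))
  haveI hZcs : CompactSpace ↥Z := isCompact_iff_compactSpace.mp hZc.isCompact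
  have hPab : ((a, b, (fun _ => true), (fun _ => false)) :
      X × X × (↥𝒜 → Bool) × (↥𝒜 → Bool)) ∈ Z := ⟨hφa1, hφa0, hφb1, hφb0⟩
  have hPba : ((b, a, (fun _ => false), (fun _ => true)) :
      X × X × (↥𝒜 → Bool) × (↥𝒜 → Bool)) ∈ Z := ⟨hφb0, hφb1, hφa0, hφa1⟩
  -- surjectivity
  have hAcell : ∀ F G : Finset ↥𝒜, F.Nonempty → (∀ i ∈ F, ∀ j ∈ G, i ≠ j) →
      ((⋂ i ∈ F, A i) ∩ (⋂ i ∈ G, (A i)ᶜ)).Nonempty := fun F G h1 h2 =>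
    cell_nonempty 𝒜 hAi A (fun i => i.2) hAinj a haA F G h1 h2
  have hBcell : ∀ F G : Finset ↥𝒜, F.Nonempty → (∀ i ∈ F, ∀ j ∈ G, i ≠ j) →
      ((⋂ i ∈ F, B i) ∩ (⋂ i ∈ G, (B i)ᶜ)).Nonempty := fun F G h1 h2 =>
    cell_nonempty ℬ hBi B (fun i => (e i).2) hBinj b hbB F G h1 h2
  have hsurj : ∀ x : X, ∃ p : X × X × (↥𝒜 → Bool) × (↥𝒜 → Bool), p ∈ Z ∧ p.1 = x := by
    intro x
    by_cases hxa : x ∈ Wa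
    · obtain ⟨y, ε, c1, c2, c3, c4⟩ := partner_lemma A B Wa Wb hWbcl hWdis Jf hJne hWadef
        (hWbdef ▸ subset_closure) hBcell x hxa
      exact ⟨(x, y, ε, (fun _ => false)), ⟨c1, c2, c3, c4⟩, rfl⟩
    · by_cases hxb : x ∈ Wb
      · obtain ⟨y, δ, c1, c2, c3, c4⟩ := partner_lemma B A Wb Wa hWacl hWdis.symm Jf hJne
          hWbdef (hWadef ▸ subset_closure) hAcell x hxb
        exact ⟨(x, y, (fun _ => false), δ), ⟨c2, c1, c4, c3⟩, rfl⟩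
      · refine ⟨(x, x, (fun _ => false), (fun _ => false)), ⟨?_, ?_, ?_, ?_⟩, rfl⟩
        · exact phiPat_bot A' x Waᶜ hxa (fun i z hz hzi => hz hzi.2)
        · exact phiPat_bot B' x Wbᶜ hxb (fun i z hz hzi => hz hzi.2)
        · exact phiPat_bot B' x Wbᶜ hxb (fun i z hz hzi => hz hzi.2)
        · exact phiPat_bot A' x Waᶜ hxa (fun i z hz hzi => hz hzi.2)
  -- fiber characterizations
  have hfiba : ∀ p : X × X × (↥𝒜 → Bool) × (↥𝒜 → Bool), p ∈ Z → p.1 = a →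
      p = (a, b, fun _ => true, fun _ => false) := by
    rintro ⟨x, y, ε, δ⟩ ⟨c1, c2, c3, c4⟩ hx1
    dsimp only at c1 c2 c3 c4 hx1
    subst hx1
    have hε := hforceA1 ε c1
    have hδ := hforceBa δ c2
    subst hε; subst hδ
    have hy := hforceB1 y c3
    subst hy
    rfl
  have hfibb : ∀ p : X × X × (↥𝒜 → Bool) × (↥𝒜 → Bool), p ∈ Z → p.1 = b →
      p = (b, a, fun _ => false, fun _ => true) := by
    rintro ⟨x, y, ε, δ⟩ ⟨c1, c2, c3, c4⟩ hx1
    dsimp only at c1 c2 c3 c4 hx1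
    subst hx1
    have hε := hforceAb ε c1
    have hδ := hforceBb δ c2
    subst hε; subst hδ
    have hy := hforceA1' y c4
    subst hy
    rfl
  -- build the data
  let σ : ↥Z → ↥Z := fun p =>
    ⟨((p : X × X × (↥𝒜 → Bool) × (↥𝒜 → Bool)).2.1,
      (p : X × X × (↥𝒜 → Bool) × (↥𝒜 → Bool)).1,
      (p : X × X × (↥𝒜 → Bool) × (↥𝒜 → Bool)).2.2.2,
      (p : X × X × (↥𝒜 → Bool) × (↥𝒜 → Bool)).2.2.1), by
        obtain ⟨c1, c2, c3, c4⟩ := p.2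
        exact ⟨c4, c3, c2, c1⟩⟩
  have hσσ : ∀ p, σ (σ p) = p := fun p => Subtype.ext rfl
  let gE : ↥Z ≃ ↥Z := ⟨σ, σ, hσσ, hσσ⟩
  have hσc : Continuous σ := by
    refine Continuous.subtype_mk ?_ _
    exact (continuous_subtype_val.snd.fst).prodMk
      ((continuous_subtype_val.fst).prodMk
        ((continuous_subtype_val.snd.snd.snd).prodMk
          (continuous_subtype_val.snd.snd.fst)))
  have hgEc : Continuous ⇑gE := hσc
  let g : ↥Z ≃ₜ ↥Z := hgEc.homeoOfEquivCompactToT2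
  let f : ↥Z → X := fun p => (p : X × X × (↥𝒜 → Bool) × (↥𝒜 → Bool)).1
  have hfc : Continuous f := continuous_subtype_val.fst
  have hfs : Function.Surjective f := by
    intro x
    obtain ⟨p, hpZ, hp1⟩ := hsurj x
    exact ⟨⟨p, hpZ⟩, hp1⟩
  have hfa : f ⁻¹' {a} = {⟨(a, b, fun _ => true, fun _ => false), hPab⟩} := by
    ext p
    simp only [Set.mem_preimage, Set.mem_singleton_iff]
    constructor
    · intro h
      exact Subtype.ext (hfiba _ p.2 h)
    · intro h
      rw [h]
  have hfb : f ⁻¹' {b} = {⟨(b, a, fun _ => false, fun _ => true), hPba⟩} := by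
    ext p
    simp only [Set.mem_preimage, Set.mem_singleton_iff]
    constructor
    · intro h
      exact Subtype.ext (hfibb _ p.2 h)
    · intro h
      rw [h]
  refine ⟨↥Z, inferInstance, inferInstance, inferInstance, f, g, hfc, hfs, ?_⟩
  rw [hfa, hfb, Set.image_singleton]
  have hgp : g ⟨(a, b, fun _ => true, fun _ => false), hPab⟩ =
      ⟨(b, a, fun _ => false, fun _ => true), hPba⟩ := Subtype.ext rfl
  rw [hgp]
end

section
/- If X is a compact Hausdorff space and κ an infinite cardinal such that every point of X has character at most κ, then X × 2^κ is pin homogeneous. -/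
universe u

section Aux

variable {X : Type u} [TopologicalSpace X]

/-- Closedness of implication-defined sets used in the main construction. -/
lemma isClosed_implSet {W : Type u} [TopologicalSpace W] (f g : W → X)
    (e1 e2 : W → Bool) (hf : Continuous f) (hg : Continuous g)
    (he1 : Continuous e1) (he2 : Continuous e2) {A : Set X} (hA : IsOpen A)
    (B : Set X) (a b : Bool) :
    IsClosed {w : W | f w ∈ A → e1 w = a → g w ∈ closure B ∧ e2 w = b} := by
  have hset : {w : W | f w ∈ A → e1 w = a → g w ∈ closure B ∧ e2 w = b} =
      ((f ⁻¹' A)ᶜ ∪ (e1 ⁻¹' {a})ᶜ) ∪ (g ⁻¹' closure B ∩ e2 ⁻¹' {b}) := by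
    ext w
    simp only [Set.mem_setOf_eq, Set.mem_union, Set.mem_compl_iff, Set.mem_preimage,
      Set.mem_singleton_iff, Set.mem_inter_iff]
    tauto
  rw [hset]
  refine IsClosed.union (IsClosed.union ?_ ?_) (IsClosed.inter ?_ ?_)
  · exact (hA.preimage hf).isClosed_compl
  · exact ((isOpen_discrete _).preimage he1).isClosed_compl
  · exact isClosed_closure.preimage hg
  · exact (isClosed_discrete _).preimage he2

variable [CompactSpace X] [T2Space X]

/-- From a neighborhood base of size at most `#ι` at `x`, and an open set `W ∋ x`,
produce an `ι`-indexed family of open neighborhoods of `x` inside `W` whose closures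
separate `x` from every other point. -/
lemma exists_pinned_base (x : X) {W : Set X} (hW : IsOpen W) (hxW : x ∈ W)
    {ι : Type u} {B : Set (Set X)} (hcard : Cardinal.mk B ≤ Cardinal.mk ι)
    (hmem : ∀ U ∈ B, U ∈ nhds x) (hbase : ∀ V ∈ nhds x, ∃ U ∈ B, U ⊆ V) :
    ∃ U : ι → Set X, (∀ α, IsOpen (U α)) ∧ (∀ α, x ∈ U α) ∧ (∀ α, U α ⊆ W) ∧
      ∀ z : X, z ≠ x → ∃ α, z ∉ closure (U α) := by
  classical
  have hne : Nonempty B := by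
    obtain ⟨U0, hU0, -⟩ := hbase Set.univ Filter.univ_mem
    exact ⟨⟨U0, hU0⟩⟩
  obtain ⟨F⟩ := (Cardinal.le_def _ _).mp hcard
  set idx : ι → Set X := Function.extend F (fun b => (b : Set X))
      (fun _ => ((Classical.arbitrary B : B) : Set X)) with hidxdef
  have hidxmem : ∀ α, idx α ∈ B := by
    intro α
    rw [hidxdef, Function.extend_def]
    split
    · exact Subtype.coe_prop _
    · exact Subtype.coe_prop _
  have hsurj : ∀ b ∈ B, ∃ α, idx α = b := by
    intro b hb
    refine ⟨F ⟨b, hb⟩, ?_⟩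
    rw [hidxdef, F.injective.extend_apply]
  refine ⟨fun α => interior (W ∩ idx α), fun α => isOpen_interior, ?_, ?_, ?_⟩
  · intro α
    rw [mem_interior_iff_mem_nhds]
    exact Filter.inter_mem (hW.mem_nhds hxW) (hmem _ (hidxmem α))
  · intro α
    exact interior_subset.trans Set.inter_subset_left
  · intro z hz
    have hzc : {z}ᶜ ∈ nhds x :=
      isOpen_compl_singleton.mem_nhds (Set.mem_compl_singleton_iff.mpr (Ne.symm hz))
    obtain ⟨N, hN, hNc, hNs⟩ := exists_mem_nhds_isClosed_subset hzc
    obtain ⟨b, hbB, hbN⟩ := hbase N hN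
    obtain ⟨α, hα⟩ := hsurj b hbB
    refine ⟨α, fun hmem' => ?_⟩
    have h1 : closure (interior (W ∩ idx α)) ⊆ N := by
      refine (closure_mono (interior_subset.trans Set.inter_subset_right)).trans ?_
      rw [hα]
      exact hNc.closure_subset_iff.mpr hbN
    exact hNs (h1 hmem') rfl

end Aux

/-- If every point of a compact Hausdorff space `X` has character at most the infinite
cardinal `κ`, then `X × 2^κ` is pin homogeneous. Here `2^κ` is realized as `ι → Bool`
for a type `ι` of cardinality `κ`, with the product topology (`Bool` discrete). -/
theorem pin_homogeneous_prod_cantor {X : Type u} [TopologicalSpace X] [CompactSpace X]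
    [T2Space X] (κ : Cardinal.{u}) (hκ : Cardinal.aleph0 ≤ κ)
    (ι : Type u) (hι : Cardinal.mk ι = κ)
    (hchar : ∀ x : X, ∃ B : Set (Set X), Cardinal.mk B ≤ κ ∧
      (∀ U ∈ B, U ∈ nhds x) ∧ ∀ V ∈ nhds x, ∃ U ∈ B, U ⊆ V) :
    ∀ p q : X × (ι → Bool), PinEquiv p q := by
  classical
  intro p q
  obtain ⟨x, s⟩ := p
  obtain ⟨y, t⟩ := q
  by_cases hxy : x = y
  · -- same first coordinate: use a translation homeomorphism of the Cantor cube
    subst hxy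
    let e : (ι → Bool) ≃ₜ (ι → Bool) :=
      ⟨⟨fun ε i => xor (ε i) (xor (s i) (t i)),
        fun ε i => xor (ε i) (xor (s i) (t i)),
        fun ε => funext fun i => by
          show xor (xor (ε i) (xor (s i) (t i))) (xor (s i) (t i)) = ε i
          cases ε i <;> cases s i <;> cases t i <;> rfl,
        fun ε => funext fun i => by
          show xor (xor (ε i) (xor (s i) (t i))) (xor (s i) (t i)) = ε i
          cases ε i <;> cases s i <;> cases t i <;> rfl⟩,
      continuous_pi fun i =>
        (continuous_of_discreteTopology
          (f := fun b : Bool => xor b (xor (s i) (t i)))).comp (continuous_apply i),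
      continuous_pi fun i =>
        (continuous_of_discreteTopology
          (f := fun b : Bool => xor b (xor (s i) (t i)))).comp (continuous_apply i)⟩
    have he : (⇑e) s = t := funext fun i => by
      show xor (s i) (xor (s i) (t i)) = t i
      cases s i <;> cases t i <;> rfl
    refine ⟨X × (ι → Bool), inferInstance, inferInstance, inferInstance, id,
      Homeomorph.prodCongr (Homeomorph.refl X) e,
      continuous_id, Function.surjective_id, ?_⟩
    simp only [Set.preimage_id, Set.image_singleton]
    congr 1
    show ((x : X), (⇑e) s) = (x, t)
    rw [he]
  · -- main case: x ≠ y
    obtain ⟨Wx, Wy, hWxo, hWyo, hxWx, hyWy, hdisj⟩ := t2_separation hxy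
    obtain ⟨Bx, hBxcard, hBxmem, hBxbase⟩ := hchar x
    obtain ⟨By, hBycard, hBymem, hBybase⟩ := hchar y
    obtain ⟨U, hUo, hxU, hUW, hUsep⟩ :=
      exists_pinned_base x hWxo hxWx (hBxcard.trans_eq hι.symm) hBxmem hBxbase
    obtain ⟨V, hVo, hyV, hVW, hVsep⟩ :=
      exists_pinned_base y hWyo hyWy (hBycard.trans_eq hι.symm) hBymem hBybase
    have hyU : ∀ α, y ∉ U α := fun α h => Set.disjoint_left.mp hdisj (hUW α h) hyWy
    have hxV : ∀ α, x ∉ V α := fun α h => Set.disjoint_left.mp hdisj hxWx (hVW α h)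
    set S : Set ((X × (ι → Bool)) × (X × (ι → Bool))) :=
      ⋂ α : ι,
        ({r | r.1.1 ∈ U α → r.1.2 α = s α → r.2.1 ∈ closure (V α) ∧ r.2.2 α = t α} ∩
         {r | r.2.1 ∈ V α → r.2.2 α = t α → r.1.1 ∈ closure (U α) ∧ r.1.2 α = s α} ∩
         {r | r.1.1 ∈ V α → r.1.2 α = t α → r.2.1 ∈ closure (U α) ∧ r.2.2 α = s α} ∩
         {r | r.2.1 ∈ U α → r.2.2 α = s α → r.1.1 ∈ closure (V α) ∧ r.1.2 α = t α})
      with hSdef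
    have hmemS : ∀ r : (X × (ι → Bool)) × (X × (ι → Bool)), r ∈ S ↔ ∀ α : ι,
        (r.1.1 ∈ U α → r.1.2 α = s α → r.2.1 ∈ closure (V α) ∧ r.2.2 α = t α) ∧
        (r.2.1 ∈ V α → r.2.2 α = t α → r.1.1 ∈ closure (U α) ∧ r.1.2 α = s α) ∧
        (r.1.1 ∈ V α → r.1.2 α = t α → r.2.1 ∈ closure (U α) ∧ r.2.2 α = s α) ∧
        (r.2.1 ∈ U α → r.2.2 α = s α → r.1.1 ∈ closure (V α) ∧ r.1.2 α = t α) := by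
      intro r
      rw [hSdef]
      simp only [Set.mem_iInter, Set.mem_inter_iff, Set.mem_setOf_eq]
      constructor
      · intro h α
        have := h α; tauto
      · intro h α
        have := h α; tauto
    have hSclosed : IsClosed S := by
      rw [hSdef]
      refine isClosed_iInter fun α => ?_
      refine IsClosed.inter (IsClosed.inter (IsClosed.inter ?_ ?_) ?_) ?_
      · exact isClosed_implSet (W := (X × (ι → Bool)) × (X × (ι → Bool))) (X := X) (fun r => r.1.1) (fun r => r.2.1)
          (fun r => r.1.2 α) (fun r => r.2.2 α)
          (continuous_fst.fst) (continuous_snd.fst)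
          ((continuous_apply α).comp continuous_fst.snd)
          ((continuous_apply α).comp continuous_snd.snd) (hUo α) (V α) (s α) (t α)
      · exact isClosed_implSet (W := (X × (ι → Bool)) × (X × (ι → Bool))) (X := X) (fun r => r.2.1) (fun r => r.1.1)
          (fun r => r.2.2 α) (fun r => r.1.2 α)
          (continuous_snd.fst) (continuous_fst.fst)
          ((continuous_apply α).comp continuous_snd.snd)
          ((continuous_apply α).comp continuous_fst.snd) (hVo α) (U α) (t α) (s α)
      · exact isClosed_implSet (W := (X × (ι → Bool)) × (X × (ι → Bool))) (X := X) (fun r => r.1.1) (fun r => r.2.1)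
          (fun r => r.1.2 α) (fun r => r.2.2 α)
          (continuous_fst.fst) (continuous_snd.fst)
          ((continuous_apply α).comp continuous_fst.snd)
          ((continuous_apply α).comp continuous_snd.snd) (hVo α) (U α) (t α) (s α)
      · exact isClosed_implSet (W := (X × (ι → Bool)) × (X × (ι → Bool))) (X := X) (fun r => r.2.1) (fun r => r.1.1)
          (fun r => r.2.2 α) (fun r => r.1.2 α)
          (continuous_snd.fst) (continuous_fst.fst)
          ((continuous_apply α).comp continuous_snd.snd)
          ((continuous_apply α).comp continuous_fst.snd) (hUo α) (V α) (s α) (t α)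
    have hUx : ∀ z : X, (∀ α, z ∈ closure (U α)) → z = x := by
      intro z hz
      by_contra h
      obtain ⟨α, hα⟩ := hUsep z h
      exact hα (hz α)
    have hVy : ∀ z : X, (∀ α, z ∈ closure (V α)) → z = y := by
      intro z hz
      by_contra h
      obtain ⟨α, hα⟩ := hVsep z h
      exact hα (hz α)
    -- the four section computations
    have hsec1 : ∀ r, r ∈ S → r.1 = ((x, s) : X × (ι → Bool)) →
        r.2 = ((y, t) : X × (ι → Bool)) := by
      intro r hr h1
      rw [hmemS] at hr
      have hc : ∀ α, r.2.1 ∈ closure (V α) ∧ r.2.2 α = t α :=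
        fun α => (hr α).1 (by rw [h1]; exact hxU α) (by rw [h1])
      exact Prod.ext (hVy _ fun α => (hc α).1) (funext fun α => (hc α).2)
    have hsec2 : ∀ r, r ∈ S → r.2 = ((y, t) : X × (ι → Bool)) →
        r.1 = ((x, s) : X × (ι → Bool)) := by
      intro r hr h1
      rw [hmemS] at hr
      have hc : ∀ α, r.1.1 ∈ closure (U α) ∧ r.1.2 α = s α :=
        fun α => (hr α).2.1 (by rw [h1]; exact hyV α) (by rw [h1])
      exact Prod.ext (hUx _ fun α => (hc α).1) (funext fun α => (hc α).2)
    have hsec3 : ∀ r, r ∈ S → r.1 = ((y, t) : X × (ι → Bool)) →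
        r.2 = ((x, s) : X × (ι → Bool)) := by
      intro r hr h1
      rw [hmemS] at hr
      have hc : ∀ α, r.2.1 ∈ closure (U α) ∧ r.2.2 α = s α :=
        fun α => (hr α).2.2.1 (by rw [h1]; exact hyV α) (by rw [h1])
      exact Prod.ext (hUx _ fun α => (hc α).1) (funext fun α => (hc α).2)
    have hsec4 : ∀ r, r ∈ S → r.2 = ((x, s) : X × (ι → Bool)) →
        r.1 = ((y, t) : X × (ι → Bool)) := by
      intro r hr h1
      rw [hmemS] at hr
      have hc : ∀ α, r.1.1 ∈ closure (V α) ∧ r.1.2 α = t α :=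
        fun α => (hr α).2.2.2 (by rw [h1]; exact hxU α) (by rw [h1])
      exact Prod.ext (hVy _ fun α => (hc α).1) (funext fun α => (hc α).2)
    -- surjectivity of the first projection
    have hexists : ∀ z : X, ∀ ε : ι → Bool,
        ∃ r : (X × (ι → Bool)) × (X × (ι → Bool)), r ∈ S ∧ r.1 = (z, ε) := by
      intro z ε
      by_cases hz : z ∈ Wy
      · refine ⟨((z, ε), (x, fun α => if z ∈ V α ∧ ε α = t α then s α else !(s α))),
          ?_, rfl⟩
        rw [hmemS]
        intro α
        refine ⟨?_, ?_, ?_, ?_⟩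
        · intro hzU _
          exact absurd hz (Set.disjoint_left.mp hdisj (hUW α hzU))
        · intro hxV' _
          exact absurd hxV' (hxV α)
        · intro hzV hεt
          refine ⟨subset_closure (hxU α), ?_⟩
          show (if z ∈ V α ∧ ε α = t α then s α else !(s α)) = s α
          rw [if_pos (And.intro hzV hεt)]
        · intro _ hδs
          have hδs' : (if z ∈ V α ∧ ε α = t α then s α else !(s α)) = s α := hδs
          by_cases hc : z ∈ V α ∧ ε α = t α
          · exact ⟨subset_closure hc.1, hc.2⟩
          · rw [if_neg hc] at hδs'
            exact absurd hδs' (Bool.not_ne_self (s α))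
      · refine ⟨((z, ε), (y, fun α => if z ∈ U α ∧ ε α = s α then t α else !(t α))),
          ?_, rfl⟩
        rw [hmemS]
        intro α
        refine ⟨?_, ?_, ?_, ?_⟩
        · intro hzU hεs
          refine ⟨subset_closure (hyV α), ?_⟩
          show (if z ∈ U α ∧ ε α = s α then t α else !(t α)) = t α
          rw [if_pos (And.intro hzU hεs)]
        · intro _ hδt
          have hδt' : (if z ∈ U α ∧ ε α = s α then t α else !(t α)) = t α := hδt
          by_cases hc : z ∈ U α ∧ ε α = s α
          · exact ⟨subset_closure hc.1, hc.2⟩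
          · rw [if_neg hc] at hδt'
            exact absurd hδt' (Bool.not_ne_self (t α))
        · intro hzV _
          exact absurd (hVW α hzV) hz
        · intro hyU' _
          exact absurd hyU' (hyU α)
    haveI hcS : CompactSpace ↥S := isCompact_iff_compactSpace.mp hSclosed.isCompact
    refine ⟨↥S ⊕ ↥S, inferInstance, inferInstance, inferInstance,
      Sum.elim (fun u : ↥S => u.val.1) (fun u : ↥S => u.val.2),
      Homeomorph.sumComm ↥S ↥S, ?_, ?_, ?_⟩
    · exact Continuous.sumElim (continuous_subtype_val.fst) (continuous_subtype_val.snd)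
    · intro z
      obtain ⟨r, hr, hr1⟩ := hexists z.1 z.2
      exact ⟨Sum.inl ⟨r, hr⟩, by simp [hr1]⟩
    · have himg : (⇑(Homeomorph.sumComm ↥S ↥S)) ''
          ((Sum.elim (fun u : ↥S => u.val.1) (fun u : ↥S => u.val.2)) ⁻¹' {(x, s)}) =
          (Homeomorph.sumComm ↥S ↥S).symm ⁻¹'
          ((Sum.elim (fun u : ↥S => u.val.1) (fun u : ↥S => u.val.2)) ⁻¹' {(x, s)}) :=
        Equiv.image_eq_preimage_symm _ _
      rw [himg]
      ext u
      simp only [Set.mem_preimage, Set.mem_singleton_iff]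
      cases u with
      | inl a =>
        show a.val.2 = (x, s) ↔ a.val.1 = (y, t)
        exact ⟨hsec4 a.val a.2, hsec3 a.val a.2⟩
      | inr a =>
        show a.val.1 = (x, s) ↔ a.val.2 = (y, t)
        exact ⟨hsec1 a.val a.2, hsec2 a.val a.2⟩
end

section
/- Every first countable, crowded (no isolated points), compact Hausdorff space is pin homogeneous. -/
universe u

lemma pin_exists_tower {X : Type u} [TopologicalSpace X] [T1Space X] [RegularSpace X]
    [FirstCountableTopology X] (a : X) (ha : ¬ IsOpen ({a} : Set X))
    (W : Set X) (hW : W ∈ nhds a) :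
    ∃ U : ℕ → Set X, (∀ n, IsOpen (U n)) ∧ (∀ n, a ∈ U n) ∧
      (∀ n, closure (U (n+1)) ⊆ U n) ∧ closure (U 0) ⊆ W ∧
      (∀ n, ((U n) \ U (n+1)).Nonempty) ∧
      (∀ x : X, x ≠ a → ∃ n, x ∉ U n) := by
  obtain ⟨B, hB⟩ := (nhds a).exists_antitone_basis
  -- every open set containing a contains a point ≠ a
  have hpt : ∀ O : Set X, IsOpen O → a ∈ O → ∃ p ∈ O, p ≠ a := by
    intro O hO haO
    by_contra h
    push_neg at h
    have : O = {a} := by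
      apply Set.eq_singleton_iff_unique_mem.mpr ⟨haO, h⟩
    exact ha (this ▸ hO)
  -- shrinking step
  have key : ∀ O : {O : Set X // IsOpen O ∧ a ∈ O}, ∀ n : ℕ,
      ∃ O' : {O : Set X // IsOpen O ∧ a ∈ O},
        closure O'.1 ⊆ O.1 ∧ O'.1 ⊆ B n ∧ (O.1 \ O'.1).Nonempty := by
    rintro ⟨O, hO, haO⟩ n
    obtain ⟨p, hpO, hpa⟩ := hpt O hO haO
    have hBn : B n ∈ nhds a := hB.1.mem_of_mem (by trivial)
    have hG : IsOpen ((O ∩ interior (B n)) \ {p}) :=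
      ((hO.inter isOpen_interior).sdiff isClosed_singleton)
    have haG : a ∈ (O ∩ interior (B n)) \ {p} :=
      ⟨⟨haO, mem_interior_iff_mem_nhds.mpr hBn⟩, fun h => hpa (by simpa using h.symm)⟩
    obtain ⟨t, htn, htc, hts⟩ := exists_mem_nhds_isClosed_subset (hG.mem_nhds haG)
    refine ⟨⟨interior t, isOpen_interior, mem_interior_iff_mem_nhds.mpr htn⟩, ?_, ?_, ⟨p, hpO, ?_⟩⟩
    · calc closure (interior t) ⊆ closure t := closure_mono interior_subset
      _ = t := htc.closure_eq
      _ ⊆ O := hts.trans (Set.diff_subset.trans Set.inter_subset_left)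
    · intro x hx
      have := hts (interior_subset hx)
      exact interior_subset this.1.2
    · intro hp
      have := hts (interior_subset hp)
      exact this.2 rfl
  choose F h1 h2 h3 using key
  -- initial open set with closure inside W
  obtain ⟨t0, ht0n, ht0c, ht0s⟩ := exists_mem_nhds_isClosed_subset hW
  let O0 : {O : Set X // IsOpen O ∧ a ∈ O} :=
    ⟨interior t0, isOpen_interior, mem_interior_iff_mem_nhds.mpr ht0n⟩
  let U' : ℕ → {O : Set X // IsOpen O ∧ a ∈ O} := fun n => Nat.rec O0 (fun n Un => F Un n) n
  have hU'succ : ∀ n, U' (n+1) = F (U' n) n := fun n => rfl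
  refine ⟨fun n => (U' n).1, fun n => (U' n).2.1, fun n => (U' n).2.2, fun n => h1 (U' n) n,
    ?_, fun n => h3 (U' n) n, ?_⟩
  · calc closure (interior t0) ⊆ closure t0 := closure_mono interior_subset
    _ = t0 := ht0c.closure_eq
    _ ⊆ W := ht0s
  · intro x hx
    have : ({x}ᶜ : Set X) ∈ nhds a := (isOpen_compl_singleton).mem_nhds (by simpa using (Ne.symm hx))
    obtain ⟨n, -, hn⟩ := hB.1.mem_iff.mp this
    exact ⟨n+1, fun hm => hn (h2 (U' n) n hm) rfl⟩

lemma pin_isClosed_A {X : Type u} [TopologicalSpace X] [T2Space X]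
    (a b : X) (U V : ℕ → Set X)
    (hUo : ∀ n, IsOpen (U n)) (hVo : ∀ n, IsOpen (V n))
    (haU : ∀ n, a ∈ U n) (hbV : ∀ n, b ∈ V n)
    (hUc : ∀ n, closure (U (n+1)) ⊆ U n) (hVc : ∀ n, closure (V (n+1)) ⊆ V n)
    (hUs : ∀ x : X, x ≠ a → ∃ n, x ∉ U n) (hVs : ∀ x : X, x ≠ b → ∃ n, x ∉ V n) :
    IsClosed (insert (a,b)
      (⋃ n, (closure (U n) \ U (n+1)) ×ˢ (closure (V n) \ V (n+1)))) := by
  set S : Set (X × X) := ⋃ n, (closure (U n) \ U (n+1)) ×ˢ (closure (V n) \ V (n+1)) with hS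
  have hUm : Antitone U := antitone_nat_of_succ_le fun n => subset_closure.trans (hUc n)
  have hVm : Antitone V := antitone_nat_of_succ_le fun n => subset_closure.trans (hVc n)
  have key : closure S ⊆ insert (a,b) S := by
    rintro ⟨p, q⟩ hpq
    by_cases hp : p = a
    · subst hp
      left
      -- show q = b
      suffices hq : q = b by rw [hq]
      by_contra hq
      obtain ⟨m, hm⟩ := hVs q hq
      have hqV : q ∉ closure (V (m+1)) := fun h => hm (hVc m h)
      have hWn : (U (m+1)) ×ˢ (closure (V (m+1)))ᶜ ∈ nhds (p, q) := by
        exact ((hUo (m+1)).prod (isClosed_closure.isOpen_compl)).mem_nhds ⟨haU (m+1), hqV⟩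
      obtain ⟨⟨x, y⟩, hxyW, hxyS⟩ := mem_closure_iff_nhds.mp hpq _ hWn
      obtain ⟨n, hn⟩ := Set.mem_iUnion.mp hxyS
      rcases le_or_gt n m with h | h
      · exact hn.1.2 (hUm (Nat.succ_le_succ h) hxyW.1)
      · exact hxyW.2 (closure_mono (hVm h) hn.2.1)
    · right
      obtain ⟨m, hm⟩ := hUs p hp
      have hpU : p ∉ closure (U (m+1)) := fun h => hm (hUc m h)
      have hWo : IsOpen ((closure (U (m+1)))ᶜ ×ˢ (Set.univ : Set X)) :=
        (isClosed_closure.isOpen_compl).prod isOpen_univ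
      have hsub : closure S ∩ (closure (U (m+1)))ᶜ ×ˢ (Set.univ : Set X)
          ⊆ closure (S ∩ (closure (U (m+1)))ᶜ ×ˢ (Set.univ : Set X)) := by
        intro z hz
        exact (Set.inter_comm _ _ ▸ hWo.inter_closure (Set.mem_inter hz.2 hz.1) : _)
      have hmem : (p, q) ∈ closure (S ∩ (closure (U (m+1)))ᶜ ×ˢ (Set.univ : Set X)) :=
        hsub ⟨hpq, hpU, trivial⟩
      have hT : S ∩ (closure (U (m+1)))ᶜ ×ˢ (Set.univ : Set X)
          ⊆ ⋃ n ∈ Finset.range (m+1),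
            (closure (U n) \ U (n+1)) ×ˢ (closure (V n) \ V (n+1)) := by
        rintro ⟨x, y⟩ ⟨hxyS, hxW, -⟩
        obtain ⟨n, hn⟩ := Set.mem_iUnion.mp hxyS
        have hnm : n ≤ m := by
          by_contra h
          push_neg at h
          exact hxW (closure_mono (hUm h) hn.1.1)
        exact Set.mem_biUnion (Finset.mem_range.mpr (Nat.lt_succ_of_le hnm)) hn
      have hTc : IsClosed (⋃ n ∈ Finset.range (m+1),
          (closure (U n) \ U (n+1)) ×ˢ (closure (V n) \ V (n+1))) := by
        apply Set.Finite.isClosed_biUnion (Finset.finite_toSet _)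
        intro n _
        exact (isClosed_closure.sdiff (hUo (n+1))).prod (isClosed_closure.sdiff (hVo (n+1)))
      have := (closure_mono (hT)) hmem
      rw [hTc.closure_eq] at this
      obtain ⟨n, -, hn⟩ := Set.mem_iUnion₂.mp this
      exact Set.mem_iUnion.mpr ⟨n, hn⟩
  have : closure (insert (a,b) S) ⊆ insert (a,b) S := by
    rw [Set.insert_eq, closure_union, closure_singleton]
    exact Set.union_subset (Set.singleton_subset_iff.mpr (Set.mem_insert _ _)) key
  exact closure_subset_iff_isClosed.mp this

lemma pin_mem_shell {X : Type u} [TopologicalSpace X] (U : ℕ → Set X)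
    (hUc : ∀ n, closure (U (n+1)) ⊆ U n) {x : X} (hx0 : x ∈ U 0)
    (hex : ∃ n, x ∉ U n) : ∃ n, x ∈ closure (U n) \ U (n+1) := by
  classical
  have hmono : ∀ n, U (n+1) ⊆ U n := fun n => subset_closure.trans (hUc n)
  have hex' : ∃ n, x ∉ U (n+1) := by
    obtain ⟨m, hm⟩ := hex
    exact ⟨m, fun h => hm (hmono m h)⟩
  refine ⟨Nat.find hex', ?_, Nat.find_spec hex'⟩
  cases hn : Nat.find hex' with
  | zero => exact subset_closure hx0
  | succ k =>
    have : ¬ (x ∉ U (k+1)) := Nat.find_min hex' (by omega)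
    push_neg at this
    exact subset_closure this

/-- Every first countable, crowded, compact Hausdorff space is pin homogeneous. -/
theorem pin_homogeneous_of_firstCountable_crowded {X : Type u} [TopologicalSpace X]
    [CompactSpace X] [T2Space X] [FirstCountableTopology X]
    (hcrowded : ∀ x : X, ¬ IsOpen ({x} : Set X)) :
    ∀ a b : X, PinEquiv a b := by
  intro a b
  rcases eq_or_ne a b with rfl | hab
  · exact ⟨X, ‹_›, ‹_›, ‹_›, id, Homeomorph.refl X, continuous_id,
      Function.surjective_id, by simp⟩
  obtain ⟨Ua, Ub, hUao, hUbo, haUa, hbUb, hdisj⟩ := t2_separation hab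
  obtain ⟨U, hUo, haU, hUc, hU0, hKne, hUs⟩ :=
    pin_exists_tower a (hcrowded a) Ua (hUao.mem_nhds haUa)
  obtain ⟨V, hVo, hbV, hVc, hV0, hLne, hVs⟩ :=
    pin_exists_tower b (hcrowded b) Ub (hUbo.mem_nhds hbUb)
  have hUm : Antitone U := antitone_nat_of_succ_le fun n => subset_closure.trans (hUc n)
  have hVm : Antitone V := antitone_nat_of_succ_le fun n => subset_closure.trans (hVc n)
  set S : Set (X × X) := ⋃ n, (closure (U n) \ U (n+1)) ×ˢ (closure (V n) \ V (n+1)) with hSdef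
  set A : Set (X × X) := insert (a,b) S with hAdef
  set D : Set (X × X) := Set.diagonal X ∩ (Prod.fst ⁻¹' (U 0 ∪ V 0)ᶜ) with hDdef
  set R : Set (X × X) := D ∪ (A ∪ Prod.swap ⁻¹' A) with hRdef
  -- basic point facts
  have haVn : ∀ n, a ∉ closure (V n) := by
    intro n h
    exact Set.disjoint_left.mp hdisj haUa (hV0 (closure_mono (hVm (Nat.zero_le n)) h))
  have hbUn : ∀ n, b ∉ closure (U n) := by
    intro n h
    exact Set.disjoint_left.mp hdisj (hU0 (closure_mono (hUm (Nat.zero_le n)) h)) hbUb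
  -- closedness
  have hAclosed : IsClosed A := pin_isClosed_A a b U V hUo hVo haU hbV hUc hVc hUs hVs
  have hDclosed : IsClosed D :=
    isClosed_diagonal.inter (((hUo 0).union (hVo 0)).isClosed_compl.preimage continuous_fst)
  have hRclosed : IsClosed R :=
    hDclosed.union (hAclosed.union (hAclosed.preimage continuous_swap))
  -- symmetry
  have hsymm : ∀ p ∈ R, Prod.swap p ∈ R := by
    rintro ⟨x, y⟩ (⟨hd1, hd2⟩ | (h | h))
    · have hxy : x = y := hd1
      exact Or.inl ⟨hxy.symm, by simpa [← hxy] using hd2⟩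
    · exact Or.inr (Or.inr (by simpa using h))
    · exact Or.inr (Or.inl h)
  -- row of a
  have hrow_a : ∀ x : X, ((a, x) ∈ R ↔ x = b) := by
    intro x
    constructor
    · rintro (⟨-, hd2⟩ | (h | h))
      · exact absurd (Or.inl (haU 0)) hd2
      · rcases h with h | h
        · exact (Prod.ext_iff.mp h).2
        · obtain ⟨n, hn⟩ := Set.mem_iUnion.mp h
          exact absurd (haU (n+1)) hn.1.2
      · rcases h with h | h
        · exact absurd (Prod.ext_iff.mp h).2 hab
        · obtain ⟨n, hn⟩ := Set.mem_iUnion.mp h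
          exact absurd hn.2.1 (haVn n)
    · intro hx
      rw [hx]
      exact Or.inr (Or.inl (Set.mem_insert _ _))
  have hrow_b : ∀ x : X, ((b, x) ∈ R ↔ x = a) := by
    intro x
    constructor
    · rintro (⟨-, hd2⟩ | (h | h))
      · exact absurd (Or.inr (hbV 0)) hd2
      · rcases h with h | h
        · exact absurd (Prod.ext_iff.mp h).1.symm hab
        · obtain ⟨n, hn⟩ := Set.mem_iUnion.mp h
          exact absurd hn.1.1 (hbUn n)
      · rcases h with h | h
        · exact (Prod.ext_iff.mp h).1
        · obtain ⟨n, hn⟩ := Set.mem_iUnion.mp h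
          exact absurd (hbV (n+1)) hn.2.2
    · intro hx
      rw [hx]
      exact Or.inr (Or.inr (show Prod.swap (b, a) ∈ A from Set.mem_insert _ _))
  -- full domain
  have hdom : ∀ x : X, ∃ y : X, (x, y) ∈ R := by
    intro x
    by_cases hxU : x ∈ U 0
    · by_cases hxa : x = a
      · exact ⟨b, by rw [hxa]; exact (hrow_a b).mpr rfl⟩
      · obtain ⟨n, hKn⟩ := pin_mem_shell U hUc hxU (hUs x hxa)
        obtain ⟨y, hy⟩ := hLne n
        refine ⟨y, Or.inr (Or.inl (Set.mem_insert_of_mem _ ?_))⟩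
        exact Set.mem_iUnion.mpr ⟨n, hKn, subset_closure hy.1, hy.2⟩
    · by_cases hxV : x ∈ V 0
      · by_cases hxb : x = b
        · exact ⟨a, by rw [hxb]; exact (hrow_b a).mpr rfl⟩
        · obtain ⟨n, hLn⟩ := pin_mem_shell V hVc hxV (hVs x hxb)
          obtain ⟨y, hy⟩ := hKne n
          refine ⟨y, Or.inr (Or.inr ?_)⟩
          show Prod.swap (x, y) ∈ A
          exact Set.mem_insert_of_mem _
            (Set.mem_iUnion.mpr ⟨n, ⟨subset_closure hy.1, hy.2⟩, hLn⟩)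
      · exact ⟨x, Or.inl ⟨rfl, fun h => h.elim hxU hxV⟩⟩
  -- assemble
  have hRcompact : CompactSpace ↥R := isCompact_iff_compactSpace.mp hRclosed.isCompact
  refine ⟨{p : X × X // p ∈ R}, inferInstance, hRcompact, inferInstance,
    fun r => r.1.1,
    { toFun := fun r => ⟨Prod.swap r.1, hsymm _ r.2⟩
      invFun := fun r => ⟨Prod.swap r.1, hsymm _ r.2⟩
      left_inv := fun r => Subtype.ext (Prod.swap_swap _)
      right_inv := fun r => Subtype.ext (Prod.swap_swap _)
      continuous_toFun := Continuous.subtype_mk (continuous_swap.comp continuous_subtype_val) _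
      continuous_invFun := Continuous.subtype_mk (continuous_swap.comp continuous_subtype_val) _ },
    continuous_fst.comp continuous_subtype_val, ?_, ?_⟩
  · intro x
    obtain ⟨y, hy⟩ := hdom x
    exact ⟨⟨(x, y), hy⟩, rfl⟩
  · ext ⟨⟨p, q⟩, hpq⟩
    simp only [Set.mem_image, Set.mem_preimage, Set.mem_singleton_iff]
    constructor
    · rintro ⟨⟨⟨s1, s2⟩, hs⟩, hsa, hgs⟩
      have hval : (s2, s1) = (p, q) := congrArg Subtype.val hgs
      have hs1 : s1 = a := hsa
      rw [hs1] at hs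
      have hs2 : s2 = b := (hrow_a s2).mp hs
      exact (Prod.mk.injEq _ _ _ _ ▸ hval).1 ▸ hs2
    · intro hp
      have hq : q = a := by
        have : (b, q) ∈ R := hp ▸ hpq
        exact (hrow_b q).mp this
      exact ⟨⟨(q, p), hsymm _ hpq⟩, hq, Subtype.ext rfl⟩
end

section
/- An arbitrary product of pin homogeneous compact Hausdorff spaces is pin homogeneous. -/
universe u

/-- A product of pin homogeneous compact Hausdorff spaces is pin homogeneous. -/
theorem pin_homogeneous_pi {I : Type v} {X : I → Type u}
    [∀ i, TopologicalSpace (X i)] [∀ i, CompactSpace (X i)] [∀ i, T2Space (X i)]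
    (h : ∀ i, ∀ a b : X i, PinEquiv a b) :
    ∀ a b : (i : I) → X i, PinEquiv a b := by
  intro a b
  choose Y tY cY t2Y f g hf hsurj hg using fun i => h i (a i) (b i)
  refine ⟨∀ i, Y i, inferInstance, inferInstance, inferInstance,
    fun y i => f i (y i), Homeomorph.piCongrRight g,
    continuous_pi fun i => (hf i).comp (continuous_apply i),
    fun x => ?_, ?_⟩
  · choose y hy using fun i => hsurj i (x i)
    exact ⟨y, funext hy⟩
  · have key : ∀ i (z : Y i), (f i (((g i).symm : Y i → Y i) z) = a i) ↔ f i z = b i := by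
      intro i z
      have h1 : z ∈ ((g i : Y i → Y i) '' (f i ⁻¹' {a i})) ↔
          ((g i).symm : Y i → Y i) z ∈ f i ⁻¹' {a i} := by
        constructor
        · rintro ⟨w, hw, rfl⟩; simpa using hw
        · intro hw; exact ⟨_, hw, (g i).apply_symm_apply _⟩
      have h2 : z ∈ ((g i : Y i → Y i) '' (f i ⁻¹' {a i})) ↔ z ∈ f i ⁻¹' {b i} := by
        rw [hg i]
      simpa using h1.symm.trans h2
    rw [show ⇑(Homeomorph.piCongrRight g) = ⇑(Homeomorph.piCongrRight g).toEquiv from rfl,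
      Equiv.image_eq_preimage_symm]
    ext y
    simp only [Set.mem_preimage, Set.mem_singleton_iff, funext_iff,
      Homeomorph.piCongrRight_symm, Equiv.toFun_as_coe, Homeomorph.coe_toEquiv]
    exact forall_congr' fun i => by
      simpa using key i (y i)
end

section
/- In the closed interval [-2, 2], the points 0 and 2 are pin equivalent: the set Y = {(x,y) ∈ [-2,2]² : |x| + |y| = 2, x ≥ -1, y ≥ -1} ∪ [-2,-1]², with f(x,y) = x and g(x,y) = (y,x), gives a continuous surjection f : Y → [-2,2] and a homeomorphism g : Y → Y with g(f⁻¹{0}) = f⁻¹{2}. -/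
open Set

private lemma pin_memY {p : ℝ × ℝ} (h : (|p.1| + |p.2| = 2 ∧ -1 ≤ p.1 ∧ -1 ≤ p.2) ∨
    (p.1 ∈ Icc (-2 : ℝ) (-1) ∧ p.2 ∈ Icc (-2 : ℝ) (-1))) : p.1 ∈ Icc (-2 : ℝ) 2 := by
  rcases h with ⟨h1, h2, h3⟩ | ⟨h1, _⟩
  · constructor
    · nlinarith [abs_nonneg p.2, neg_abs_le p.1]
    · nlinarith [abs_nonneg p.2, le_abs_self p.1]
  · exact ⟨h1.1, by linarith [h1.2]⟩

private lemma pin_swapY {p : ℝ × ℝ} (h : (|p.1| + |p.2| = 2 ∧ -1 ≤ p.1 ∧ -1 ≤ p.2) ∨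
    (p.1 ∈ Icc (-2 : ℝ) (-1) ∧ p.2 ∈ Icc (-2 : ℝ) (-1))) :
    (|(Prod.swap p).1| + |(Prod.swap p).2| = 2 ∧ -1 ≤ (Prod.swap p).1 ∧ -1 ≤ (Prod.swap p).2) ∨
    ((Prod.swap p).1 ∈ Icc (-2 : ℝ) (-1) ∧ (Prod.swap p).2 ∈ Icc (-2 : ℝ) (-1)) := by
  rcases h with ⟨h1, h2, h3⟩ | ⟨h1, h2⟩
  · exact Or.inl ⟨by simp [Prod.swap]; linarith, h3, h2⟩
  · exact Or.inr ⟨h2, h1⟩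

open Set in
/-- In `[-2, 2]`, the points `0` and `2` are pin equivalent, witnessed by the subspace
`Y = {(x,y) : |x| + |y| = 2, x ≥ -1, y ≥ -1} ∪ [-2,-1]²` of the plane, the
first-coordinate projection `f`, and the coordinate swap `g`: `f` is a continuous
surjection onto `[-2,2]`, `g` is a continuous involution of `Y`, and
`g '' (f ⁻¹' {0}) = f ⁻¹' {2}`. -/
theorem pin_example_interval :
    ∃ (f : {p : ℝ × ℝ // (|p.1| + |p.2| = 2 ∧ -1 ≤ p.1 ∧ -1 ≤ p.2) ∨
              (p.1 ∈ Icc (-2 : ℝ) (-1) ∧ p.2 ∈ Icc (-2 : ℝ) (-1))} → Icc (-2 : ℝ) 2)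
      (g : {p : ℝ × ℝ // (|p.1| + |p.2| = 2 ∧ -1 ≤ p.1 ∧ -1 ≤ p.2) ∨
              (p.1 ∈ Icc (-2 : ℝ) (-1) ∧ p.2 ∈ Icc (-2 : ℝ) (-1))} →
            {p : ℝ × ℝ // (|p.1| + |p.2| = 2 ∧ -1 ≤ p.1 ∧ -1 ≤ p.2) ∨
              (p.1 ∈ Icc (-2 : ℝ) (-1) ∧ p.2 ∈ Icc (-2 : ℝ) (-1))}),
      (∀ p, (f p : ℝ) = (p : ℝ × ℝ).1) ∧
      (∀ p, ((g p : ℝ × ℝ)) = Prod.swap (p : ℝ × ℝ)) ∧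
      Continuous f ∧ Function.Surjective f ∧
      Continuous g ∧ (∀ p, g (g p) = p) ∧
      g '' (f ⁻¹' {⟨(0 : ℝ), by norm_num⟩}) = f ⁻¹' {⟨(2 : ℝ), by norm_num⟩} := by
  refine ⟨fun p => ⟨(p : ℝ × ℝ).1, pin_memY p.2⟩,
    fun p => ⟨Prod.swap (p : ℝ × ℝ), pin_swapY p.2⟩,
    fun p => rfl, fun p => rfl, ?_, ?_, ?_, ?_, ?_⟩
  · exact Continuous.subtype_mk (continuous_fst.comp continuous_subtype_val) _
  · rintro ⟨x, hx1, hx2⟩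
    by_cases h : -1 ≤ x
    · have hax : |x| ≤ 2 := abs_le.mpr ⟨hx1, hx2⟩
      refine ⟨⟨(x, 2 - |x|), Or.inl ⟨?_, h, by simp only; linarith⟩⟩, rfl⟩
      simp only
      rw [abs_of_nonneg (by linarith : (0:ℝ) ≤ 2 - |x|)]
      ring
    · exact ⟨⟨(x, -1), Or.inr ⟨⟨hx1, by linarith⟩, by norm_num⟩⟩, rfl⟩
  · exact Continuous.subtype_mk (continuous_swap.comp continuous_subtype_val) _
  · intro p
    exact Subtype.ext (Prod.swap_swap _)
  · ext ⟨⟨a, b⟩, hp⟩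
    constructor
    · rintro ⟨⟨⟨x, y⟩, hq⟩, hq0, hgq⟩
      have hx0 : x = 0 := congrArg Subtype.val hq0
      subst hx0
      have hy2 : y = 2 := by
        rcases hq with ⟨h1, h2, h3⟩ | ⟨h1, _⟩
        · simp only [abs_zero, zero_add] at h1
          rcases abs_cases y with ⟨e, _⟩ | ⟨e, _⟩
          · linarith
          · simp only at h3; linarith
        · simp only [mem_Icc] at h1; linarith [h1.2]
      have : ((a, b) : ℝ × ℝ) = (y, 0) := (congrArg Subtype.val hgq).symm
      exact Subtype.ext (by simp [Prod.ext_iff] at this ⊢; exact (this.1.trans hy2))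
    · intro h2
      have ha : a = 2 := congrArg Subtype.val h2
      subst ha
      have hb : b = 0 := by
        rcases hp with ⟨h1, _, h3⟩ | ⟨h1, _⟩
        · simp only at h1 h3
          rw [abs_of_nonneg (by norm_num : (0:ℝ) ≤ 2)] at h1
          have := abs_nonneg b
          have hb2 : |b| = 0 := by linarith
          exact abs_eq_zero.mp hb2
        · simp only [mem_Icc] at h1; linarith [h1.2]
      subst hb
      refine ⟨⟨(0, 2), Or.inl ⟨by norm_num, by norm_num, by norm_num⟩⟩,
        Subtype.ext rfl, Subtype.ext rfl⟩
end
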